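/- arXiv:2106.01224 — 8 statements merged into one kernel-verified Lean document; each statement's English description precedes it below -/
import Mathlib

section
/- Every BST⊗-formula Φ with n distinct variables is satisfiable (by a set assignment) if and only if it is satisfied by some partition with 2^n − 1 blocks. -/
namespace BSTO

/-- The unordered Cartesian product `s ⊗ t = {{u,v} | u ∈ s, v ∈ t}`, as a class of ZFC sets. -/
def uprod (s t : ZFSet) : Set ZFSet := {w | ∃ u ∈ s, ∃ v ∈ t, w = ({u, v} : ZFSet)}

/-- A partition: a collection of pairwise disjoint nonempty sets. -/
def IsPartition (S : ZFSet) : Prop :=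
  (∀ b, b ∈ S → b ≠ (∅ : ZFSet)) ∧
    ∀ b, b ∈ S → ∀ c, c ∈ S → b ≠ c → ∀ t, t ∈ b → t ∉ c

/-- `Pow*₁,₂ B`: members of the intersecting power set of `B` of cardinality 1 or 2. -/
def powAst12 (B : ZFSet) : Set ZFSet :=
  {t | t ⊆ ZFSet.sUnion B ∧ (∀ s, s ∈ B → ∃ u, u ∈ t ∧ u ∈ s) ∧ ∃ u v : ZFSet, t = {u, v}}

/-- BST⊗-formulae. -/
inductive Fmla (V : Type) : Type
  | eqUnion (x y z : V)
  | eqInter (x y z : V)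
  | eqDiff  (x y z : V)
  | eqUprod (x y z : V)
  | subset  (x y : V)
  | not (φ : Fmla V)
  | and (φ ψ : Fmla V)
  | or (φ ψ : Fmla V)

def Fmla.Sat {V : Type} (M : V → ZFSet) : Fmla V → Prop
  | .eqUnion x y z => M x = M y ∪ M z
  | .eqInter x y z => M x = M y ∩ M z
  | .eqDiff x y z  => M x = M y \ M z
  | .eqUprod x y z => (M x).toSet = uprod (M y) (M z)
  | .subset x y    => M x ⊆ M y
  | .not φ         => ¬ Fmla.Sat M φ
  | .and φ ψ       => Fmla.Sat M φ ∧ Fmla.Sat M ψ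
  | .or φ ψ        => Fmla.Sat M φ ∨ Fmla.Sat M ψ

/-- A partition `S` satisfies `φ` if the set assignment induced by some
partition assignment `J` (mapping variables to sets of blocks) models `φ`. -/
def SatByPartition {V : Type} (S : ZFSet) (φ : Fmla V) : Prop :=
  ∃ J : V → ZFSet, (∀ v, J v ⊆ S) ∧ Fmla.Sat (fun v => ZFSet.sUnion (J v)) φ

/-- BST literals. -/
inductive BSTLit (V : Type) : Type
  | eqUnion (x y z : V)
  | eqDiff  (x y z : V)
  | ne (x y : V)

def BSTLit.Sat {V : Type} (M : V → ZFSet) : BSTLit V → Prop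
  | .eqUnion x y z => M x = M y ∪ M z
  | .eqDiff x y z  => M x = M y \ M z
  | .ne x y        => M x ≠ M y

/-- A map `F : V → pow(pow⁺ V)` fulfills a BST literal. -/
def BSTLit.FulfilledBy {V : Type} (F : V → Set (Set V)) : BSTLit V → Prop
  | .eqUnion x y z => F x = F y ∪ F z
  | .eqDiff x y z  => F x = F y \ F z
  | .ne x y        => F x ≠ F y

/-- BST⊗ literals. -/
inductive Lit (V : Type) : Type
  | eqUnion (x y z : V)
  | eqDiff  (x y z : V)
  | eqUprod (x y z : V)
  | ne (x y : V)

def Lit.Sat {V : Type} (M : V → ZFSet) : Lit V → Prop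
  | .eqUnion x y z => M x = M y ∪ M z
  | .eqDiff x y z  => M x = M y \ M z
  | .eqUprod x y z => (M x).toSet = uprod (M y) (M z)
  | .ne x y        => M x ≠ M y

/-- The nodes over a set of places: nonempty subsets of cardinality at most 2. -/
def NodesOf (P : Type) : Set (Set P) := {A | ∃ p q : P, A = {p, q}}

/-- Unordered product of two sets of places: the set of nodes `{u,v}`, `u ∈ s`, `v ∈ t`. -/
def setUprod {P : Type} (s t : Set P) : Set (Set P) := {A | ∃ u ∈ s, ∃ v ∈ t, A = {u, v}}

/-- Accessibility of a place from the source places, w.r.t. a target map `T`. -/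
inductive Accessible {P : Type} (T : Set P → Set P) : P → Prop
  | source (p : P) (h : ∀ A ∈ NodesOf P, p ∉ T A) : Accessible T p
  | step (p : P) (A : Set P) (hA : A ∈ NodesOf P)
      (hacc : ∀ q ∈ A, Accessible T q) (hp : p ∈ T A) : Accessible T p

/-- Conditions (a), (b), (c1)-(c3) for a literal, w.r.t. a ⊗-graph with target map `T`
and a candidate fulfilling map `F`. -/
def Lit.GraphFulfilled {P V : Type} (T : Set P → Set P) (F : V → Set P) : Lit V → Prop
  | .eqUnion x y z => F x = F y ∪ F z
  | .eqDiff x y z  => F x = F y \ F z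
  | .ne x y        => F x ≠ F y
  | .eqUprod x y z =>
      (∀ υ ∈ F y, ∀ ζ ∈ F z, (T {υ, ζ}).Nonempty ∧ T {υ, ζ} ⊆ F x) ∧
      F x ⊆ (⋃ A ∈ setUprod (F y) (F z), T A) ∧
      (⋃ A ∈ NodesOf P \ setUprod (F y) (F z), T A) ∩ F x = ∅

/-- A ⊗-graph (given by its target map `T`) fulfills the conjunction `Φ` via `F`. -/
def Fulfills {P V : Type} (T : Set P → Set P) (F : V → Set P) (Φ : List (Lit V)) : Prop :=
  ∀ l ∈ Φ, Lit.GraphFulfilled T F l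

/-- `S'` is a ⊗-subpartition of the partition `S`. -/
def OSubpart (S : ZFSet) (S' : Set ZFSet) : Prop :=
  S' ⊆ S.toSet ∧ ∃ B : Set ZFSet,
    (∀ b ∈ B, ∃ p, p ∈ S ∧ ∃ q, q ∈ S ∧ b = ({p, q} : ZFSet)) ∧
    (⋃ c ∈ S', c.toSet) = ⋃ b ∈ B, powAst12 b

/-- `Σ_⊗`: the maximal ⊗-subpartition of `S` (the union of all ⊗-subpartitions). -/
def sigmaOtimes (S : ZFSet) : Set ZFSet := {b | ∃ S', OSubpart S S' ∧ b ∈ S'}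

/-- The target map of the ⊗-graph induced by a partition `S` via the bijection `e`,
relative to the set `Pi` of ⊗-upblocks. -/
def inducedT (S : ZFSet) {P : Type} (e : P ≃ S.toSet) (Pi : Set ZFSet) (A : Set P) :
    Set P :=
  {q | ∃ p₁ p₂ : P, A = {p₁, p₂} ∧ ({(e p₁ : ZFSet), (e p₂ : ZFSet)} : ZFSet) ∈ Pi ∧
    (e q : ZFSet) ∈ sigmaOtimes S ∧
    ((e q : ZFSet).toSet ∩ powAst12 ({(e p₁ : ZFSet), (e p₂ : ZFSet)} : ZFSet)).Nonempty}

/-- `m` is the maximum of `Sp` w.r.t. the strict order `r`. -/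
def IsMaxIn {P : Type} (r : P → P → Prop) (Sp : Set P) (m : P) : Prop :=
  m ∈ Sp ∧ ∀ p ∈ Sp, p = m ∨ r p m

/-- `r` is a topological ⊗-order for the ⊗-graph with target map `T`:
a strict total order on places with `max A ≺ max T(A)` for every ⊗-node `A`. -/
def IsTopOOrder {P : Type} (T : Set P → Set P) (r : P → P → Prop) : Prop :=
  (∀ a, ¬ r a a) ∧ (∀ a b c, r a b → r b c → r a c) ∧ (∀ a b, a ≠ b → r a b ∨ r b a) ∧
  ∀ A ∈ NodesOf P, (T A).Nonempty →
    ∃ m m', IsMaxIn r A m ∧ IsMaxIn r (T A) m' ∧ r m m'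

/-- Hereditarily finite ZFC sets. -/
inductive IsHF : ZFSet → Prop
  | mk (x : ZFSet) (hfin : x.toSet.Finite) (hmem : ∀ y ∈ x, IsHF y) : IsHF x

theorem ZFSet.mem_toSet (a u : ZFSet) : a ∈ u.toSet ↔ a ∈ u := Iff.rfl

namespace Collapse

universe u v
open Classical

/-- witness distinguishing two distinct sets -/
noncomputable def wne (a b : ZFSet.{u}) : ZFSet.{u} :=
  if h : ∃ w, ¬(w ∈ a ↔ w ∈ b) then h.choose else ∅

theorem wne_spec {a b : ZFSet.{u}} (h : a ≠ b) : ¬(wne a b ∈ a ↔ wne a b ∈ b) := by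
  have hex : ∃ w, ¬(w ∈ a ↔ w ∈ b) := by
    by_contra hc
    push_neg at hc
    exact h (ZFSet.ext hc)
  rw [wne, dif_pos hex]
  exact hex.choose_spec

/-- chosen triple of distinct elements, when one exists -/
noncomputable def tri (t : ZFSet.{u}) : Set ZFSet.{u} :=
  if h : ∃ p : ZFSet.{u} × ZFSet.{u} × ZFSet.{u},
      p.1 ∈ t ∧ p.2.1 ∈ t ∧ p.2.2 ∈ t ∧ p.1 ≠ p.2.1 ∧ p.1 ≠ p.2.2 ∧ p.2.1 ≠ p.2.2
  then {h.choose.1, h.choose.2.1, h.choose.2.2} else ∅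

theorem tri_countable (t : ZFSet.{u}) : (tri t).Countable := by
  rw [tri]; split
  · exact ((Set.finite_singleton _).insert _ |>.insert _).countable
  · exact Set.countable_empty

theorem tri_spec {t a b c : ZFSet.{u}} (ha : a ∈ t) (hb : b ∈ t) (hc : c ∈ t)
    (hab : a ≠ b) (hac : a ≠ c) (hbc : b ≠ c) :
    ∃ a' b' c', a' ∈ t ∧ a' ∈ tri t ∧ b' ∈ t ∧ b' ∈ tri t ∧ c' ∈ t ∧ c' ∈ tri t ∧
      a' ≠ b' ∧ a' ≠ c' ∧ b' ≠ c' := by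
  have hex : ∃ p : ZFSet.{u} × ZFSet.{u} × ZFSet.{u},
      p.1 ∈ t ∧ p.2.1 ∈ t ∧ p.2.2 ∈ t ∧ p.1 ≠ p.2.1 ∧ p.1 ≠ p.2.2 ∧ p.2.1 ≠ p.2.2 :=
    ⟨(a, b, c), ha, hb, hc, hab, hac, hbc⟩
  obtain ⟨h1, h2, h3, h4, h5, h6⟩ := hex.choose_spec
  refine ⟨hex.choose.1, hex.choose.2.1, hex.choose.2.2, h1, ?_, h2, ?_, h3, ?_, h4, h5, h6⟩ <;>
    · rw [tri, dif_pos hex]; simp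

/-- elements of a set that happens to be an (unordered) pair -/
def smallElts (t : ZFSet.{u}) : Set ZFSet.{u} :=
  {s | s ∈ t ∧ ∃ uu vv : ZFSet.{u}, t = ({uu, vv} : ZFSet)}

theorem smallElts_countable (t : ZFSet.{u}) : (smallElts t).Countable := by
  by_cases h : ∃ uu vv : ZFSet.{u}, t = ({uu, vv} : ZFSet)
  · obtain ⟨uu, vv, rfl⟩ := h
    refine Set.Countable.mono ?_ ((Set.finite_singleton vv).insert uu).countable
    rintro s ⟨hs, -⟩
    rcases ZFSet.mem_insert_iff.mp hs with rfl | hs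
    · exact Set.mem_insert _ _
    · exact Set.mem_insert_of_mem _ (ZFSet.mem_singleton.mp hs)
  · have : smallElts t = ∅ := by
      ext s; simp only [smallElts, Set.mem_setOf_eq, Set.mem_empty_iff_false, iff_false]
      rintro ⟨-, hs⟩; exact h hs
    rw [this]; exact Set.countable_empty

/-- one closure step -/
noncomputable def step (A : Set ZFSet.{u}) : Set ZFSet.{u} :=
  A ∪ Set.image2 wne A A ∪ Set.image2 (fun a b => ({a, b} : ZFSet)) A A ∪
    (⋃ t ∈ A, smallElts t) ∪ (⋃ t ∈ A, tri t)

theorem subset_step (A : Set ZFSet.{u}) : A ⊆ step A := by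
  intro a ha; exact Or.inl (Or.inl (Or.inl (Or.inl ha)))

theorem step_mono {A B : Set ZFSet.{u}} (h : A ⊆ B) : step A ⊆ step B := by
  rintro x (((( hx | hx) | hx) | hx) | hx)
  · exact subset_step B (h hx)
  · exact Or.inl (Or.inl (Or.inl (Or.inr (Set.image2_subset h h hx))))
  · exact Or.inl (Or.inl (Or.inr (Set.image2_subset h h hx)))
  · exact Or.inl (Or.inr (Set.biUnion_mono h (fun _ _ => le_refl _) hx))
  · exact Or.inr (Set.biUnion_mono h (fun _ _ => le_refl _) hx)

theorem step_countable {A : Set ZFSet.{u}} (h : A.Countable) : (step A).Countable := by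
  refine (((h.union (h.image2 h _)).union (h.image2 h _)).union
    (h.biUnion fun t _ => smallElts_countable t)).union
    (h.biUnion fun t _ => tri_countable t)

/-- the closure -/
noncomputable def clos (A : Set ZFSet.{u}) : Set ZFSet.{u} := ⋃ k, step^[k] A

theorem iter_mono_succ (A : Set ZFSet.{u}) (k : ℕ) : step^[k] A ⊆ step^[k + 1] A := by
  induction k with
  | zero => exact subset_step A
  | succ k ih => rw [Function.iterate_succ_apply', Function.iterate_succ_apply']
                 exact step_mono ih

theorem iter_mono (A : Set ZFSet.{u}) {j k : ℕ} (h : j ≤ k) : step^[j] A ⊆ step^[k] A := by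
  induction h with
  | refl => exact le_refl _
  | step h ih => exact ih.trans (iter_mono_succ A _)

theorem subset_clos (A : Set ZFSet.{u}) : A ⊆ clos A :=
  Set.subset_iUnion (fun k => step^[k] A) 0

theorem mem_clos {A : Set ZFSet.{u}} {x : ZFSet.{u}} :
    x ∈ clos A ↔ ∃ k, x ∈ step^[k] A := Set.mem_iUnion

theorem clos_countable {A : Set ZFSet.{u}} (h : A.Countable) : (clos A).Countable := by
  refine Set.countable_iUnion fun k => ?_
  induction k with
  | zero => exact h
  | succ k ih => rw [Function.iterate_succ_apply']; exact step_countable ih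

theorem clos_pair {A : Set ZFSet.{u}} {a b : ZFSet.{u}} (ha : a ∈ clos A) (hb : b ∈ clos A) :
    ({a, b} : ZFSet) ∈ clos A := by
  obtain ⟨j, hj⟩ := mem_clos.mp ha
  obtain ⟨k, hk⟩ := mem_clos.mp hb
  refine mem_clos.mpr ⟨max j k + 1, ?_⟩
  rw [Function.iterate_succ_apply']
  exact Or.inl (Or.inl (Or.inr (Set.mem_image2_of_mem
    (iter_mono A (le_max_left j k) hj) (iter_mono A (le_max_right j k) hk))))

theorem clos_wne {A : Set ZFSet.{u}} {a b : ZFSet.{u}} (ha : a ∈ clos A) (hb : b ∈ clos A) :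
    wne a b ∈ clos A := by
  obtain ⟨j, hj⟩ := mem_clos.mp ha
  obtain ⟨k, hk⟩ := mem_clos.mp hb
  refine mem_clos.mpr ⟨max j k + 1, ?_⟩
  rw [Function.iterate_succ_apply']
  exact Or.inl (Or.inl (Or.inl (Or.inr (Set.mem_image2_of_mem
    (iter_mono A (le_max_left j k) hj) (iter_mono A (le_max_right j k) hk)))))

theorem clos_smallElts {A : Set ZFSet.{u}} {t s : ZFSet.{u}} (ht : t ∈ clos A)
    (hs : s ∈ smallElts t) : s ∈ clos A := by
  obtain ⟨j, hj⟩ := mem_clos.mp ht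
  refine mem_clos.mpr ⟨j + 1, ?_⟩
  rw [Function.iterate_succ_apply']
  exact Or.inl (Or.inr (Set.mem_biUnion hj hs))

theorem clos_tri {A : Set ZFSet.{u}} {t s : ZFSet.{u}} (ht : t ∈ clos A)
    (hs : s ∈ tri t) : s ∈ clos A := by
  obtain ⟨j, hj⟩ := mem_clos.mp ht
  refine mem_clos.mpr ⟨j + 1, ?_⟩
  rw [Function.iterate_succ_apply']
  exact Or.inr (Set.mem_biUnion hj hs)

/-- Mostowski-style collapse relative to a countable set enumerated by `enum`,
landing in an arbitrary universe. -/
noncomputable def coll (enum : ℕ → ZFSet.{u}) : ZFSet.{u} → ZFSet.{v} :=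
  ZFSet.mem_wf.fix fun a ih =>
    ZFSet.range fun p : {i : ℕ // enum i ∈ a} => ih (enum p.1) p.2

theorem coll_def (enum : ℕ → ZFSet.{u}) (a : ZFSet.{u}) :
    coll.{u, v} enum a =
      ZFSet.range fun p : {i : ℕ // enum i ∈ a} => coll.{u, v} enum (enum p.1) :=
  WellFounded.fix_eq _ _ _

theorem mem_coll {enum : ℕ → ZFSet.{u}} {a : ZFSet.{u}} {x : ZFSet.{v}} :
    x ∈ coll.{u, v} enum a ↔ ∃ b ∈ Set.range enum, b ∈ a ∧ coll.{u, v} enum b = x := by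
  rw [coll_def, ZFSet.mem_range]
  constructor
  · rintro ⟨⟨i, hi⟩, rfl⟩
    exact ⟨enum i, ⟨i, rfl⟩, hi, rfl⟩
  · rintro ⟨b, ⟨i, rfl⟩, hb, rfl⟩
    exact ⟨⟨i, hb⟩, rfl⟩

variable {enum : ℕ → ZFSet.{u}}

theorem coll_mem {a b : ZFSet.{u}} (hb : b ∈ Set.range enum) (hba : b ∈ a) :
    coll.{u, v} enum b ∈ coll.{u, v} enum a :=
  mem_coll.mpr ⟨b, hb, hba, rfl⟩

/-- E is extensional: distinct members are separated by a member of E. -/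
def Extl (E : Set ZFSet.{u}) : Prop :=
  ∀ a ∈ E, ∀ b ∈ E, a ≠ b → ∃ w ∈ E, ¬(w ∈ a ↔ w ∈ b)

theorem coll_injOn (hext : Extl (Set.range enum)) :
    ∀ a ∈ Set.range enum, ∀ b ∈ Set.range enum,
      coll.{u, v} enum a = coll.{u, v} enum b → a = b := by
  intro a
  induction a using WellFounded.induction ZFSet.mem_wf with
  | _ a IH =>
  intro haE b hbE hab
  by_contra hne
  obtain ⟨w, hwE, hw⟩ := hext a haE b hbE hne
  rcases Classical.em (w ∈ a) with hwa | hwa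
  · have hwb : w ∉ b := fun h => hw ⟨fun _ => h, fun _ => hwa⟩
    have : coll.{u, v} enum w ∈ coll.{u, v} enum b := hab ▸ coll_mem hwE hwa
    obtain ⟨b', hb'E, hb'b, hb'⟩ := mem_coll.mp this
    exact hwb (IH w hwa hwE b' hb'E hb'.symm ▸ hb'b)
  · have hwb : w ∈ b := by
      rcases Classical.em (w ∈ b) with h | h
      · exact h
      · exact absurd ⟨fun h' => absurd h' hwa, fun h' => absurd h' h⟩ hw
    have : coll.{u, v} enum w ∈ coll.{u, v} enum a := hab ▸ coll_mem hwE hwb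
    obtain ⟨a', ha'E, ha'a, ha'⟩ := mem_coll.mp this
    exact hwa ((IH a' ha'a ha'E w hwE ha') ▸ ha'a)

theorem coll_mem_iff (hext : Extl (Set.range enum)) {a b : ZFSet.{u}}
    (ha : a ∈ Set.range enum) (hb : b ∈ Set.range enum) :
    coll.{u, v} enum b ∈ coll.{u, v} enum a ↔ b ∈ a := by
  constructor
  · intro h
    obtain ⟨b', hb'E, hb'a, hb'⟩ := mem_coll.mp h
    exact (coll_injOn hext b' hb'E b hb hb') ▸ hb'a
  · exact coll_mem hb

theorem coll_pair (hext : Extl (Set.range enum)) {a b : ZFSet.{u}}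
    (ha : a ∈ Set.range enum) (hb : b ∈ Set.range enum) :
    coll.{u, v} enum ({a, b} : ZFSet) =
      ({coll.{u, v} enum a, coll.{u, v} enum b} : ZFSet) := by
  apply ZFSet.ext
  intro z
  rw [mem_coll, ZFSet.mem_insert_iff, ZFSet.mem_singleton]
  constructor
  · rintro ⟨c, hcE, hc, rfl⟩
    rcases ZFSet.mem_insert_iff.mp hc with rfl | hc
    · exact Or.inl rfl
    · exact Or.inr (congrArg _ (ZFSet.mem_singleton.mp hc))
  · rintro (rfl | rfl)
    · exact ⟨a, ha, ZFSet.mem_insert_iff.mpr (Or.inl rfl), rfl⟩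
    · exact ⟨b, hb, ZFSet.mem_insert_iff.mpr
        (Or.inr (ZFSet.mem_singleton.mpr rfl)), rfl⟩

section Atoms

theorem union_iff (hext : Extl (Set.range enum)) {X Y Z : ZFSet.{u}} (hX : X ∈ Set.range enum)
    (hY : Y ∈ Set.range enum) (hZ : Z ∈ Set.range enum)
    (hseed : X ≠ Y ∪ Z → ∃ w ∈ Set.range enum, ¬(w ∈ X ↔ w ∈ Y ∪ Z)) :
    X = Y ∪ Z ↔ coll.{u, v} enum X = coll.{u, v} enum Y ∪ coll.{u, v} enum Z := by
  constructor
  · rintro rfl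
    apply ZFSet.ext; intro z
    rw [ZFSet.mem_union, mem_coll]
    constructor
    · rintro ⟨b, hbE, hb, rfl⟩
      rcases ZFSet.mem_union.mp hb with hb | hb
      · exact Or.inl (coll_mem hbE hb)
      · exact Or.inr (coll_mem hbE hb)
    · rintro (hz | hz) <;> obtain ⟨b, hbE, hb, rfl⟩ := mem_coll.mp hz
      · exact ⟨b, hbE, ZFSet.mem_union.mpr (Or.inl hb), rfl⟩
      · exact ⟨b, hbE, ZFSet.mem_union.mpr (Or.inr hb), rfl⟩
  · intro hc
    by_contra hne
    obtain ⟨w, hwE, hw⟩ := hseed hne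
    rcases Classical.em (w ∈ X) with hwX | hwX
    · have hwYZ : w ∉ Y ∪ Z := fun hh => hw ⟨fun _ => hh, fun _ => hwX⟩
      have : coll.{u, v} enum w ∈ coll.{u, v} enum X := coll_mem hwE hwX
      rw [hc] at this
      rcases ZFSet.mem_union.mp this with h | h
      · exact hwYZ (ZFSet.mem_union.mpr (Or.inl ((coll_mem_iff hext hY hwE).mp h)))
      · exact hwYZ (ZFSet.mem_union.mpr (Or.inr ((coll_mem_iff hext hZ hwE).mp h)))
    · have hwYZ : w ∈ Y ∪ Z := by
        by_contra hh
        exact hw ⟨fun h => absurd h hwX, fun h => absurd h hh⟩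
      have : coll.{u, v} enum w ∈ coll.{u, v} enum X := by
        rw [hc, ZFSet.mem_union]
        rcases ZFSet.mem_union.mp hwYZ with h | h
        · exact Or.inl (coll_mem hwE h)
        · exact Or.inr (coll_mem hwE h)
      exact hwX ((coll_mem_iff hext hX hwE).mp this)

theorem inter_iff (hext : Extl (Set.range enum)) {X Y Z : ZFSet.{u}} (hX : X ∈ Set.range enum)
    (hY : Y ∈ Set.range enum) (hZ : Z ∈ Set.range enum)
    (hseed : X ≠ Y ∩ Z → ∃ w ∈ Set.range enum, ¬(w ∈ X ↔ w ∈ Y ∩ Z)) :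
    X = Y ∩ Z ↔ coll.{u, v} enum X = coll.{u, v} enum Y ∩ coll.{u, v} enum Z := by
  constructor
  · rintro rfl
    apply ZFSet.ext; intro z
    rw [ZFSet.mem_inter, mem_coll]
    constructor
    · rintro ⟨b, hbE, hb, rfl⟩
      exact ⟨coll_mem hbE (ZFSet.mem_inter.mp hb).1, coll_mem hbE (ZFSet.mem_inter.mp hb).2⟩
    · rintro ⟨hz1, hz2⟩
      obtain ⟨b, hbE, hb, rfl⟩ := mem_coll.mp hz1
      have hbZ : b ∈ Z := (coll_mem_iff hext hZ hbE).mp hz2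
      exact ⟨b, hbE, ZFSet.mem_inter.mpr ⟨hb, hbZ⟩, rfl⟩
  · intro hc
    by_contra hne
    obtain ⟨w, hwE, hw⟩ := hseed hne
    rcases Classical.em (w ∈ X) with hwX | hwX
    · have hwYZ : w ∉ Y ∩ Z := fun hh => hw ⟨fun _ => hh, fun _ => hwX⟩
      have : coll.{u, v} enum w ∈ coll.{u, v} enum X := coll_mem hwE hwX
      rw [hc, ZFSet.mem_inter] at this
      exact hwYZ (ZFSet.mem_inter.mpr ⟨(coll_mem_iff hext hY hwE).mp this.1,
        (coll_mem_iff hext hZ hwE).mp this.2⟩)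
    · have hwYZ : w ∈ Y ∩ Z := by
        by_contra hh
        exact hw ⟨fun h => absurd h hwX, fun h => absurd h hh⟩
      have : coll.{u, v} enum w ∈ coll.{u, v} enum X := by
        rw [hc, ZFSet.mem_inter]
        exact ⟨coll_mem hwE (ZFSet.mem_inter.mp hwYZ).1,
          coll_mem hwE (ZFSet.mem_inter.mp hwYZ).2⟩
      exact hwX ((coll_mem_iff hext hX hwE).mp this)

theorem diff_iff (hext : Extl (Set.range enum)) {X Y Z : ZFSet.{u}} (hX : X ∈ Set.range enum)
    (hY : Y ∈ Set.range enum) (hZ : Z ∈ Set.range enum)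
    (hseed : X ≠ Y \ Z → ∃ w ∈ Set.range enum, ¬(w ∈ X ↔ w ∈ Y \ Z)) :
    X = Y \ Z ↔ coll.{u, v} enum X = coll.{u, v} enum Y \ coll.{u, v} enum Z := by
  constructor
  · rintro rfl
    apply ZFSet.ext; intro z
    rw [ZFSet.mem_sdiff, mem_coll]
    constructor
    · rintro ⟨b, hbE, hb, rfl⟩
      refine ⟨coll_mem hbE (ZFSet.mem_sdiff.mp hb).1, fun hz => ?_⟩
      exact (ZFSet.mem_sdiff.mp hb).2 ((coll_mem_iff hext hZ hbE).mp hz)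
    · rintro ⟨hz1, hz2⟩
      obtain ⟨b, hbE, hb, rfl⟩ := mem_coll.mp hz1
      exact ⟨b, hbE, ZFSet.mem_sdiff.mpr ⟨hb, fun hbZ => hz2 (coll_mem hbE hbZ)⟩, rfl⟩
  · intro hc
    by_contra hne
    obtain ⟨w, hwE, hw⟩ := hseed hne
    rcases Classical.em (w ∈ X) with hwX | hwX
    · have hwYZ : w ∉ Y \ Z := fun hh => hw ⟨fun _ => hh, fun _ => hwX⟩
      have : coll.{u, v} enum w ∈ coll.{u, v} enum X := coll_mem hwE hwX
      rw [hc, ZFSet.mem_sdiff] at this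
      refine hwYZ (ZFSet.mem_sdiff.mpr ⟨(coll_mem_iff hext hY hwE).mp this.1, fun hwZ => ?_⟩)
      exact this.2 (coll_mem hwE hwZ)
    · have hwYZ : w ∈ Y \ Z := by
        by_contra hh
        exact hw ⟨fun h => absurd h hwX, fun h => absurd h hh⟩
      have : coll.{u, v} enum w ∈ coll.{u, v} enum X := by
        rw [hc, ZFSet.mem_sdiff]
        refine ⟨coll_mem hwE (ZFSet.mem_sdiff.mp hwYZ).1, fun hz => ?_⟩
        exact (ZFSet.mem_sdiff.mp hwYZ).2 ((coll_mem_iff hext hZ hwE).mp hz)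
      exact hwX ((coll_mem_iff hext hX hwE).mp this)

theorem subset_iff (hext : Extl (Set.range enum)) {X Y : ZFSet.{u}} (hX : X ∈ Set.range enum)
    (hY : Y ∈ Set.range enum)
    (hseed : ¬(X ⊆ Y) → ∃ w ∈ Set.range enum, w ∈ X ∧ w ∉ Y) :
    X ⊆ Y ↔ coll.{u, v} enum X ⊆ coll.{u, v} enum Y := by
  constructor
  · intro h z hz
    obtain ⟨b, hbE, hb, rfl⟩ := mem_coll.mp hz
    exact coll_mem hbE (h hb)
  · intro hc
    by_contra hne
    obtain ⟨w, hwE, hwX, hwY⟩ := hseed hne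
    exact hwY ((coll_mem_iff hext hY hwE).mp (hc (coll_mem hwE hwX)))

theorem three_of_not_pair {t : ZFSet.{u}} (hne : t ≠ ∅)
    (hp : ∀ uu vv : ZFSet.{u}, t ≠ ({uu, vv} : ZFSet)) :
    ∃ a b c : ZFSet.{u}, a ∈ t ∧ b ∈ t ∧ c ∈ t ∧ a ≠ b ∧ a ≠ c ∧ b ≠ c := by
  obtain ⟨a, ha⟩ : ∃ a, a ∈ t := by
    by_contra h; push_neg at h; exact hne (ZFSet.ext fun z =>
      ⟨fun hz => absurd hz (h z), fun hz => absurd hz (ZFSet.notMem_empty z)⟩)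
  obtain ⟨b, hb, hab⟩ : ∃ b, b ∈ t ∧ b ≠ a := by
    by_contra h; push_neg at h
    refine hp a a (ZFSet.ext fun z => ?_)
    rw [ZFSet.mem_insert_iff, ZFSet.mem_singleton, or_self]
    exact ⟨fun hz => h z hz, fun hz => hz ▸ ha⟩
  obtain ⟨c, hc, hca, hcb⟩ : ∃ c, c ∈ t ∧ c ≠ a ∧ c ≠ b := by
    by_contra h; push_neg at h
    refine hp a b (ZFSet.ext fun z => ?_)
    rw [ZFSet.mem_insert_iff, ZFSet.mem_singleton]
    constructor
    · intro hz
      by_cases hza : z = a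
      · exact Or.inl hza
      · exact Or.inr (h z hz hza)
    · rintro (rfl | rfl)
      · exact ha
      · exact hb
  exact ⟨a, b, c, ha, hb, hc, fun h => hab h.symm, fun h => hca h.symm, fun h => hcb h.symm⟩

theorem coll_empty : coll.{u, v} enum (∅ : ZFSet.{u}) = ∅ := by
  apply ZFSet.ext; intro z
  rw [mem_coll]
  constructor
  · rintro ⟨b, -, hb, -⟩
    exact absurd hb (ZFSet.notMem_empty b)
  · intro hz; exact absurd hz (ZFSet.notMem_empty z)

theorem uprod_iff (hext : Extl (Set.range enum)) {X Y Z : ZFSet.{u}} (hX : X ∈ Set.range enum)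
    (hY : Y ∈ Set.range enum) (hZ : Z ∈ Set.range enum)
    (hsmall : ∀ t ∈ Set.range enum, ∀ s ∈ smallElts t, s ∈ Set.range enum)
    (htri : ∀ t ∈ Set.range enum, ∀ s ∈ tri t, s ∈ Set.range enum)
    (hpair : ∀ a ∈ Set.range enum, ∀ b ∈ Set.range enum,
      ({a, b} : ZFSet) ∈ Set.range enum)
    (hseed : X.toSet ≠ uprod Y Z →
      (∃ t ∈ Set.range enum, t ∈ X ∧ t ∉ uprod Y Z) ∨
      (∃ uu ∈ Set.range enum, ∃ vv ∈ Set.range enum,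
        uu ∈ Y ∧ vv ∈ Z ∧ ({uu, vv} : ZFSet) ∉ X)) :
    X.toSet = uprod Y Z ↔
      (coll.{u, v} enum X).toSet = uprod (coll.{u, v} enum Y) (coll.{u, v} enum Z) := by
  constructor
  · intro h
    ext z
    rw [ZFSet.mem_toSet]
    constructor
    · intro hz
      obtain ⟨t, htE, htX, rfl⟩ := mem_coll.mp hz
      obtain ⟨uu, huu, vv, hvv, rfl⟩ : ∃ uu ∈ Y, ∃ vv ∈ Z, t = ({uu, vv} : ZFSet) := by
        have := h ▸ (ZFSet.mem_toSet t X).mpr htX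
        exact this
      have huE : uu ∈ Set.range enum := hsmall _ htE uu
        ⟨ZFSet.mem_insert_iff.mpr (Or.inl rfl), uu, vv, rfl⟩
      have hvE : vv ∈ Set.range enum := hsmall _ htE vv
        ⟨ZFSet.mem_insert_iff.mpr (Or.inr (ZFSet.mem_singleton.mpr rfl)), uu, vv, rfl⟩
      rw [coll_pair hext huE hvE]
      exact ⟨coll.{u, v} enum uu, coll_mem huE huu, coll.{u, v} enum vv, coll_mem hvE hvv, rfl⟩
    · rintro ⟨α, hα, β, hβ, rfl⟩
      obtain ⟨uu, huE, huY, rfl⟩ := mem_coll.mp hα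
      obtain ⟨vv, hvE, hvZ, rfl⟩ := mem_coll.mp hβ
      have hpX : ({uu, vv} : ZFSet) ∈ X := by
        have : ({uu, vv} : ZFSet) ∈ uprod Y Z := ⟨uu, huY, vv, hvZ, rfl⟩
        rw [← h] at this
        exact (ZFSet.mem_toSet _ _).mp this
      rw [← coll_pair hext huE hvE]
      exact coll_mem (hpair _ huE _ hvE) hpX
  · intro hc
    by_contra hne
    rcases hseed hne with ⟨t, htE, htX, htU⟩ | ⟨uu, huE, vv, hvE, huY, hvZ, hpX⟩
    · -- c t ∈ c X but must not be in uprod of images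
      have hmem : coll.{u, v} enum t ∈ coll.{u, v} enum X := coll_mem htE htX
      have : coll.{u, v} enum t ∈ uprod (coll.{u, v} enum Y) (coll.{u, v} enum Z) := by
        rw [← hc]; exact (ZFSet.mem_toSet _ _).mpr hmem
      obtain ⟨α, hα, β, hβ, hpair_eq⟩ := this
      obtain ⟨uu, huE, huY, rfl⟩ := mem_coll.mp hα
      obtain ⟨vv, hvE, hvZ, rfl⟩ := mem_coll.mp hβ
      by_cases hp : ∃ a b : ZFSet.{u}, t = ({a, b} : ZFSet)
      · obtain ⟨a, b, rfl⟩ := hp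
        have haE : a ∈ Set.range enum := hsmall _ htE a
          ⟨ZFSet.mem_insert_iff.mpr (Or.inl rfl), a, b, rfl⟩
        have hbE : b ∈ Set.range enum := hsmall _ htE b
          ⟨ZFSet.mem_insert_iff.mpr (Or.inr (ZFSet.mem_singleton.mpr rfl)), a, b, rfl⟩
        rw [coll_pair hext haE hbE] at hpair_eq
        -- {c a, c b} = {c u, c v} : derive {a,b} = {u,v}
        have hmemiff : ∀ w : ZFSet.{v}, w ∈ ({coll.{u,v} enum a, coll.{u,v} enum b} : ZFSet) ↔
            w ∈ ({coll.{u,v} enum uu, coll.{u,v} enum vv} : ZFSet) := fun w => by rw [hpair_eq]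
        have key : ({a, b} : ZFSet) = ({uu, vv} : ZFSet) := by
          apply ZFSet.ext; intro z
          rw [ZFSet.mem_insert_iff, ZFSet.mem_singleton,
            ZFSet.mem_insert_iff, ZFSet.mem_singleton]
          constructor
          · rintro (rfl | rfl)
            · rcases ZFSet.mem_insert_iff.mp ((hmemiff _).mp
                (ZFSet.mem_insert_iff.mpr (Or.inl rfl))) with h' | h'
              · exact Or.inl (coll_injOn hext _ haE _ huE h')
              · exact Or.inr (coll_injOn hext _ haE _ hvE (ZFSet.mem_singleton.mp h'))
            · rcases ZFSet.mem_insert_iff.mp ((hmemiff _).mp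
                (ZFSet.mem_insert_iff.mpr (Or.inr (ZFSet.mem_singleton.mpr rfl)))) with h' | h'
              · exact Or.inl (coll_injOn hext _ hbE _ huE h')
              · exact Or.inr (coll_injOn hext _ hbE _ hvE (ZFSet.mem_singleton.mp h'))
          · rintro (rfl | rfl)
            · rcases ZFSet.mem_insert_iff.mp ((hmemiff _).mpr
                (ZFSet.mem_insert_iff.mpr (Or.inl rfl))) with h' | h'
              · exact Or.inl (coll_injOn hext _ huE _ haE h')
              · exact Or.inr (coll_injOn hext _ huE _ hbE (ZFSet.mem_singleton.mp h'))
            · rcases ZFSet.mem_insert_iff.mp ((hmemiff _).mpr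
                (ZFSet.mem_insert_iff.mpr (Or.inr (ZFSet.mem_singleton.mpr rfl)))) with h' | h'
              · exact Or.inl (coll_injOn hext _ hvE _ haE h')
              · exact Or.inr (coll_injOn hext _ hvE _ hbE (ZFSet.mem_singleton.mp h'))
        exact htU ⟨uu, huY, vv, hvZ, key⟩
      · push_neg at hp
        by_cases ht0 : t = ∅
        · subst ht0
          rw [coll_empty] at hpair_eq
          have : coll.{u,v} enum uu ∈ (∅ : ZFSet.{v}) := by
            rw [hpair_eq]; exact ZFSet.mem_insert_iff.mpr (Or.inl rfl)
          exact ZFSet.notMem_empty _ this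
        · obtain ⟨a, b, c, hat, hbt, hct, hab, hac, hbc⟩ := three_of_not_pair ht0 hp
          obtain ⟨a', b', c', ha't, ha'E', hb't, hb'E', hc't, hc'E', hab', hac', hbc'⟩ :=
            tri_spec hat hbt hct hab hac hbc
          have ha'E : a' ∈ Set.range enum := htri _ htE _ ha'E'
          have hb'E : b' ∈ Set.range enum := htri _ htE _ hb'E'
          have hc'E : c' ∈ Set.range enum := htri _ htE _ hc'E'
          have mem3 : ∀ s : ZFSet.{u}, s ∈ Set.range enum → s ∈ t →
              coll.{u,v} enum s = coll.{u,v} enum uu ∨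
              coll.{u,v} enum s = coll.{u,v} enum vv := by
            intro s hsE hst
            have : coll.{u,v} enum s ∈ ({coll.{u,v} enum uu, coll.{u,v} enum vv} : ZFSet) := by
              rw [← hpair_eq]; exact coll_mem hsE hst
            rcases ZFSet.mem_insert_iff.mp this with h' | h'
            · exact Or.inl h'
            · exact Or.inr (ZFSet.mem_singleton.mp h')
          rcases mem3 a' ha'E ha't with e1 | e1 <;>
            rcases mem3 b' hb'E hb't with e2 | e2 <;>
            rcases mem3 c' hc'E hc't with e3 | e3
          · exact hab' (coll_injOn hext _ ha'E _ hb'E (e1.trans e2.symm))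
          · exact hab' (coll_injOn hext _ ha'E _ hb'E (e1.trans e2.symm))
          · exact hac' (coll_injOn hext _ ha'E _ hc'E (e1.trans e3.symm))
          · exact hbc' (coll_injOn hext _ hb'E _ hc'E (e2.trans e3.symm))
          · exact hbc' (coll_injOn hext _ hb'E _ hc'E (e2.trans e3.symm))
          · exact hac' (coll_injOn hext _ ha'E _ hc'E (e1.trans e3.symm))
          · exact hab' (coll_injOn hext _ ha'E _ hb'E (e1.trans e2.symm))
          · exact hab' (coll_injOn hext _ ha'E _ hb'E (e1.trans e2.symm))
    · -- pair of seeded elements is in the uprod of images but not in c X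
      have hpE : ({uu, vv} : ZFSet) ∈ Set.range enum := hpair _ huE _ hvE
      have hmem : coll.{u,v} enum ({uu, vv} : ZFSet) ∈
          uprod (coll.{u,v} enum Y) (coll.{u,v} enum Z) := by
        rw [coll_pair hext huE hvE]
        exact ⟨_, coll_mem huE huY, _, coll_mem hvE hvZ, rfl⟩
      rw [← hc, ZFSet.mem_toSet] at hmem
      exact hpX ((coll_mem_iff hext hX hpE).mp hmem)

end Atoms

section Seeds

/-- witness element of `X \ Y` when `X ⊄ Y` -/
noncomputable def wsub (X Y : ZFSet.{u}) : ZFSet.{u} :=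
  if h : ∃ w, w ∈ X ∧ w ∉ Y then h.choose else ∅

theorem wsub_spec {X Y : ZFSet.{u}} (h : ¬(X ⊆ Y)) : wsub X Y ∈ X ∧ wsub X Y ∉ Y := by
  have hex : ∃ w, w ∈ X ∧ w ∉ Y := by
    by_contra hc; push_neg at hc
    exact h fun z hz => hc z hz
  rw [wsub, dif_pos hex]
  exact hex.choose_spec

/-- witness set for a failed ⊗-atom -/
noncomputable def wup (X Y Z : ZFSet.{u}) : Set ZFSet.{u} :=
  if h : ∃ t, t ∈ X ∧ t ∉ uprod Y Z then {h.choose}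
  else if h2 : ∃ p : ZFSet.{u} × ZFSet.{u},
      p.1 ∈ Y ∧ p.2 ∈ Z ∧ ({p.1, p.2} : ZFSet) ∉ X then {h2.choose.1, h2.choose.2}
  else ∅

theorem wup_countable (X Y Z : ZFSet.{u}) : (wup X Y Z).Countable := by
  rw [wup]; split
  · exact Set.countable_singleton _
  · split
    · exact ((Set.finite_singleton _).insert _).countable
    · exact Set.countable_empty

theorem wup_spec {X Y Z : ZFSet.{u}} (h : X.toSet ≠ uprod Y Z) :
    (∃ t ∈ wup X Y Z, t ∈ X ∧ t ∉ uprod Y Z) ∨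
    (∃ uu ∈ wup X Y Z, ∃ vv ∈ wup X Y Z, uu ∈ Y ∧ vv ∈ Z ∧ ({uu, vv} : ZFSet) ∉ X) := by
  by_cases h1 : ∃ t, t ∈ X ∧ t ∉ uprod Y Z
  · rw [wup, dif_pos h1]
    exact Or.inl ⟨h1.choose, rfl, h1.choose_spec⟩
  · have h2 : ∃ p : ZFSet.{u} × ZFSet.{u},
        p.1 ∈ Y ∧ p.2 ∈ Z ∧ ({p.1, p.2} : ZFSet) ∉ X := by
      push_neg at h1
      have : ∃ t, ¬(t ∈ X.toSet ↔ t ∈ uprod Y Z) := by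
        by_contra hc; push_neg at hc
        exact h (Set.ext fun t => hc t)
      obtain ⟨t, ht⟩ := this
      rw [ZFSet.mem_toSet] at ht
      rcases Classical.em (t ∈ X) with htX | htX
      · exact absurd (h1 t htX) fun hU => ht ⟨fun _ => hU, fun _ => htX⟩
      · have htU : t ∈ uprod Y Z := by
          by_contra hU
          exact ht ⟨fun hh => absurd hh htX, fun hh => absurd hh hU⟩
        obtain ⟨uu, huu, vv, hvv, rfl⟩ := htU
        exact ⟨(uu, vv), huu, hvv, htX⟩
    rw [wup, dif_neg h1, dif_pos h2]
    obtain ⟨hp1, hp2, hp3⟩ := h2.choose_spec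
    exact Or.inr ⟨h2.choose.1, Set.mem_insert _ _, h2.choose.2,
      Set.mem_insert_of_mem _ rfl, hp1, hp2, hp3⟩

/-- seed witnesses for all atoms of a formula -/
noncomputable def seedSet {V : Type} (M : V → ZFSet.{u}) : Fmla V → Set ZFSet.{u}
  | .eqUnion x y z => {wne (M x) (M y ∪ M z)}
  | .eqInter x y z => {wne (M x) (M y ∩ M z)}
  | .eqDiff x y z  => {wne (M x) (M y \ M z)}
  | .eqUprod x y z => wup (M x) (M y) (M z)
  | .subset x y    => {wsub (M x) (M y)}
  | .not φ         => seedSet M φ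
  | .and φ ψ       => seedSet M φ ∪ seedSet M ψ
  | .or φ ψ        => seedSet M φ ∪ seedSet M ψ

theorem seedSet_countable {V : Type} (M : V → ZFSet.{u}) :
    ∀ φ : Fmla V, (seedSet M φ).Countable
  | .eqUnion x y z => Set.countable_singleton _
  | .eqInter x y z => Set.countable_singleton _
  | .eqDiff x y z  => Set.countable_singleton _
  | .eqUprod x y z => wup_countable _ _ _
  | .subset x y    => Set.countable_singleton _
  | .not φ         => seedSet_countable M φ
  | .and φ ψ       => (seedSet_countable M φ).union (seedSet_countable M ψ)
  | .or φ ψ        => (seedSet_countable M φ).union (seedSet_countable M ψ)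

/-- the witness conditions a set `E` must satisfy, per atom of `φ` -/
def SeedIn {V : Type} (M : V → ZFSet.{u}) (E : Set ZFSet.{u}) : Fmla V → Prop
  | .eqUnion x y z => M x ≠ M y ∪ M z → ∃ w ∈ E, ¬(w ∈ M x ↔ w ∈ M y ∪ M z)
  | .eqInter x y z => M x ≠ M y ∩ M z → ∃ w ∈ E, ¬(w ∈ M x ↔ w ∈ M y ∩ M z)
  | .eqDiff x y z  => M x ≠ M y \ M z → ∃ w ∈ E, ¬(w ∈ M x ↔ w ∈ M y \ M z)
  | .eqUprod x y z => (M x).toSet ≠ uprod (M y) (M z) →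
      (∃ t ∈ E, t ∈ M x ∧ t ∉ uprod (M y) (M z)) ∨
      (∃ uu ∈ E, ∃ vv ∈ E, uu ∈ M y ∧ vv ∈ M z ∧ ({uu, vv} : ZFSet) ∉ M x)
  | .subset x y    => ¬(M x ⊆ M y) → ∃ w ∈ E, w ∈ M x ∧ w ∉ M y
  | .not φ         => SeedIn M E φ
  | .and φ ψ       => SeedIn M E φ ∧ SeedIn M E ψ
  | .or φ ψ        => SeedIn M E φ ∧ SeedIn M E ψ

theorem seedIn_of_subset {V : Type} (M : V → ZFSet.{u}) {E : Set ZFSet.{u}} :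
    ∀ φ : Fmla V, seedSet M φ ⊆ E → SeedIn M E φ
  | .eqUnion x y z, hsub => fun hne =>
      ⟨wne (M x) (M y ∪ M z), hsub rfl, wne_spec hne⟩
  | .eqInter x y z, hsub => fun hne =>
      ⟨wne (M x) (M y ∩ M z), hsub rfl, wne_spec hne⟩
  | .eqDiff x y z, hsub => fun hne =>
      ⟨wne (M x) (M y \ M z), hsub rfl, wne_spec hne⟩
  | .eqUprod x y z, hsub => fun hne => by
      rcases wup_spec hne with ⟨t, htW, ht⟩ | ⟨uu, huW, vv, hvW, hr⟩
      · exact Or.inl ⟨t, hsub htW, ht⟩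
      · exact Or.inr ⟨uu, hsub huW, vv, hsub hvW, hr⟩
  | .subset x y, hsub => fun hne =>
      ⟨wsub (M x) (M y), hsub rfl, wsub_spec hne⟩
  | .not φ, hsub => seedIn_of_subset M φ hsub
  | .and φ ψ, hsub => ⟨seedIn_of_subset M φ (subset_trans Set.subset_union_left hsub),
      seedIn_of_subset M ψ (subset_trans Set.subset_union_right hsub)⟩
  | .or φ ψ, hsub => ⟨seedIn_of_subset M φ (subset_trans Set.subset_union_left hsub),
      seedIn_of_subset M ψ (subset_trans Set.subset_union_right hsub)⟩

end Seeds

section SatIff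

theorem sat_iff {V : Type} {M : V → ZFSet.{u}}
    (hext : Extl (Set.range enum)) (hM : ∀ x, M x ∈ Set.range enum)
    (hsmall : ∀ t ∈ Set.range enum, ∀ s ∈ smallElts t, s ∈ Set.range enum)
    (htri : ∀ t ∈ Set.range enum, ∀ s ∈ tri t, s ∈ Set.range enum)
    (hpair : ∀ a ∈ Set.range enum, ∀ b ∈ Set.range enum,
      ({a, b} : ZFSet) ∈ Set.range enum) :
    ∀ φ : Fmla V, SeedIn M (Set.range enum) φ →
      (Fmla.Sat M φ ↔ Fmla.Sat (fun x => coll.{u, v} enum (M x)) φ)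
  | .eqUnion x y z, hseed =>
      union_iff hext (hM x) (hM y) (hM z) hseed
  | .eqInter x y z, hseed =>
      inter_iff hext (hM x) (hM y) (hM z) hseed
  | .eqDiff x y z, hseed =>
      diff_iff hext (hM x) (hM y) (hM z) hseed
  | .eqUprod x y z, hseed =>
      uprod_iff hext (hM x) (hM y) (hM z) hsmall htri hpair hseed
  | .subset x y, hseed =>
      subset_iff hext (hM x) (hM y) hseed
  | .not φ, hseed =>
      not_congr (sat_iff hext hM hsmall htri hpair φ hseed)
  | .and φ ψ, hseed =>
      and_congr (sat_iff hext hM hsmall htri hpair φ hseed.1)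
        (sat_iff hext hM hsmall htri hpair ψ hseed.2)
  | .or φ ψ, hseed =>
      or_congr (sat_iff hext hM hsmall htri hpair φ hseed.1)
        (sat_iff hext hM hsmall htri hpair ψ hseed.2)

end SatIff

/-- universe transfer for satisfiability of BST⊗-formulae -/
theorem transfer {V : Type} (φ : Fmla V) (M : V → ZFSet.{u}) (hM : Fmla.Sat M φ)
    (hV : Set.Countable (Set.univ : Set V)) :
    ∃ M' : V → ZFSet.{v}, Fmla.Sat M' φ := by
  classical
  set A0 : Set ZFSet.{u} := insert ∅ (Set.range M ∪ seedSet M φ) with hA0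
  have hA0c : A0.Countable := by
    refine Set.Countable.insert _ (Set.Countable.union ?_ (seedSet_countable M φ))
    have : Set.range M = M '' Set.univ := (Set.image_univ).symm
    rw [this]
    exact hV.image M
  set E : Set ZFSet.{u} := clos A0 with hE
  have hEc : E.Countable := clos_countable hA0c
  have hEne : E.Nonempty := ⟨∅, subset_clos A0 (Set.mem_insert _ _)⟩
  obtain ⟨enum, henum⟩ := hEc.exists_eq_range hEne
  have hrange : Set.range enum = E := henum.symm
  have hext : Extl (Set.range enum) := by
    rw [hrange]
    intro a ha b hb hne
    exact ⟨wne a b, clos_wne ha hb, wne_spec hne⟩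
  have hMe : ∀ x, M x ∈ Set.range enum := by
    intro x
    rw [hrange]
    exact subset_clos A0 (Set.mem_insert_of_mem _ (Or.inl ⟨x, rfl⟩))
  have hsmall : ∀ t ∈ Set.range enum, ∀ s ∈ smallElts t, s ∈ Set.range enum := by
    rw [hrange]; exact fun t ht s hs => clos_smallElts ht hs
  have htri : ∀ t ∈ Set.range enum, ∀ s ∈ tri t, s ∈ Set.range enum := by
    rw [hrange]; exact fun t ht s hs => clos_tri ht hs
  have hpair : ∀ a ∈ Set.range enum, ∀ b ∈ Set.range enum,
      ({a, b} : ZFSet) ∈ Set.range enum := by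
    rw [hrange]; exact fun a ha b hb => clos_pair ha hb
  have hseed : SeedIn M (Set.range enum) φ := by
    refine seedIn_of_subset M φ ?_
    rw [hrange]
    exact fun w hw => subset_clos A0 (Set.mem_insert_of_mem _ (Or.inr hw))
  exact ⟨fun x => coll.{u, v} enum (M x),
    (sat_iff hext hMe hsmall htri hpair φ hseed).mp hM⟩

end Collapse

namespace Stmt1Aux

noncomputable def listZF : List ZFSet → ZFSet
  | [] => ∅
  | a :: l => insert a (listZF l)

theorem mem_listZF {x : ZFSet} : ∀ {l : List ZFSet}, x ∈ listZF l ↔ x ∈ l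
  | [] => by simp [listZF]
  | a :: l => by simp [listZF, ZFSet.mem_insert_iff, mem_listZF (l := l)]

def natZF : ℕ → ZFSet
  | 0 => ∅
  | k + 1 => insert (natZF k) (natZF k)

theorem natZF_mem_of_lt : ∀ {m k : ℕ}, m < k → natZF m ∈ natZF k
  | m, k + 1, h => by
    rcases Nat.lt_succ_iff_lt_or_eq.mp h with h' | rfl
    · exact ZFSet.mem_insert_iff.mpr (Or.inr (natZF_mem_of_lt h'))
    · exact ZFSet.mem_insert_iff.mpr (Or.inl rfl)

theorem natZF_inj : Function.Injective natZF := by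
  intro m k h
  rcases lt_trichotomy m k with h' | h' | h'
  · exact absurd (h ▸ natZF_mem_of_lt h') (ZFSet.mem_irrefl _)
  · exact h'
  · exact absurd (h ▸ natZF_mem_of_lt h') (ZFSet.mem_irrefl _)

section Main
variable {n : ℕ} (M : Fin n → ZFSet)

noncomputable def U : ZFSet := ZFSet.sUnion (listZF ((List.finRange n).map M))

theorem mem_U {t : ZFSet} : t ∈ U M ↔ ∃ i, t ∈ M i := by
  simp only [U, ZFSet.mem_sUnion, mem_listZF, List.mem_map, List.mem_finRange, true_and]
  constructor
  · rintro ⟨z, ⟨i, rfl⟩, ht⟩; exact ⟨i, ht⟩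
  · rintro ⟨i, ht⟩; exact ⟨M i, ⟨i, rfl⟩, ht⟩

/-- Venn region for index set σ. -/
noncomputable def B (σ : Finset (Fin n)) : ZFSet :=
  ZFSet.sep (fun t => ∀ i, t ∈ M i ↔ i ∈ σ) (U M)

theorem mem_B {t : ZFSet} {σ : Finset (Fin n)} :
    t ∈ B M σ ↔ t ∈ U M ∧ ∀ i, t ∈ M i ↔ i ∈ σ := ZFSet.mem_sep

/-- Fresh dummy element for σ. -/
noncomputable def d (σ : Finset (Fin n)) : ZFSet :=
  insert (U M) {natZF (Encodable.encode σ)}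

theorem U_mem_d (σ : Finset (Fin n)) : U M ∈ d M σ :=
  ZFSet.mem_insert_iff.mpr (Or.inl rfl)

theorem d_not_mem_U (σ : Finset (Fin n)) : d M σ ∉ U M :=
  fun h => ZFSet.mem_asymm h (U_mem_d M σ)

theorem d_inj {σ τ : Finset (Fin n)} (h : d M σ = d M τ) : σ = τ := by
  have hmem : natZF (Encodable.encode τ) ∈ d M σ := by
    rw [h]; exact ZFSet.mem_insert_iff.mpr (Or.inr (ZFSet.mem_singleton.mpr rfl))
  have hmem' : natZF (Encodable.encode σ) ∈ d M τ := by
    rw [← h]; exact ZFSet.mem_insert_iff.mpr (Or.inr (ZFSet.mem_singleton.mpr rfl))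
  rcases ZFSet.mem_insert_iff.mp hmem with h1 | h1
  · rcases ZFSet.mem_insert_iff.mp hmem' with h2 | h2
    · exact Encodable.encode_injective (natZF_inj (h2.trans h1.symm))
    · exact Encodable.encode_injective (natZF_inj (ZFSet.mem_singleton.mp h2))
  · exact (Encodable.encode_injective (natZF_inj (ZFSet.mem_singleton.mp h1))).symm

open Classical in
noncomputable def C (σ : Finset (Fin n)) : ZFSet :=
  if B M σ = ∅ then {d M σ} else B M σ

theorem C_ne_empty (σ : Finset (Fin n)) : C M σ ≠ ∅ := by
  unfold C; split
  · intro h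
    exact ZFSet.notMem_empty _ (h ▸ ZFSet.mem_singleton.mpr (rfl : d M σ = d M σ))
  · assumption

theorem eq_of_mem_C {t : ZFSet} {σ τ : Finset (Fin n)}
    (hσ : t ∈ C M σ) (hτ : t ∈ C M τ) : σ = τ := by
  unfold C at hσ hτ
  split at hσ <;> split at hτ
  · exact d_inj M ((ZFSet.mem_singleton.mp hσ).symm.trans (ZFSet.mem_singleton.mp hτ))
  · exact absurd ((ZFSet.mem_singleton.mp hσ) ▸ (mem_B M).mp hτ).1 (d_not_mem_U M σ)
  · exact absurd ((ZFSet.mem_singleton.mp hτ) ▸ (mem_B M).mp hσ).1 (d_not_mem_U M τ)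
  · have h1 := ((mem_B M).mp hσ).2
    have h2 := ((mem_B M).mp hτ).2
    exact Finset.ext fun i => (h1 i).symm.trans (h2 i)

/-- If a member of a block lies in `M v`, the block is the real region `B σ` and `v ∈ σ`. -/
theorem mem_C_real {t s : ZFSet} {σ : Finset (Fin n)} {v : Fin n}
    (ht : t ∈ C M σ) (hs : s ∈ C M σ) (hsv : s ∈ M v) : v ∈ σ ∧ t ∈ M v := by
  unfold C at ht hs
  by_cases hB : B M σ = ∅
  · rw [if_pos hB] at hs
    exact absurd ((ZFSet.mem_singleton.mp hs) ▸ (mem_U M).mpr ⟨v, hsv⟩) (d_not_mem_U M σ)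
  · rw [if_neg hB] at ht hs
    have h1 := ((mem_B M).mp ht).2
    have h2 := ((mem_B M).mp hs).2
    have hv : v ∈ σ := (h2 v).mp hsv
    exact ⟨hv, (h1 v).mpr hv⟩

abbrev NESub (n : ℕ) := {σ : Finset (Fin n) // σ.Nonempty}

noncomputable def S : ZFSet :=
  listZF ((Finset.univ : Finset (NESub n)).toList.map (fun σ => C M σ.1))

theorem mem_S {b : ZFSet} : b ∈ S M ↔ ∃ σ : NESub n, C M σ.1 = b := by
  rw [S, mem_listZF]
  constructor
  · intro h
    obtain ⟨σ, _, rfl⟩ := List.mem_map.mp h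
    exact ⟨σ, rfl⟩
  · rintro ⟨σ, rfl⟩
    exact List.mem_map.mpr ⟨σ, Finset.mem_toList.mpr (Finset.mem_univ σ), rfl⟩

theorem isPartition_S :
    (∀ b, b ∈ S M → b ≠ (∅ : ZFSet)) ∧
      ∀ b, b ∈ S M → ∀ c, c ∈ S M → b ≠ c → ∀ t, t ∈ b → t ∉ c := by
  constructor
  · rintro b hb
    obtain ⟨σ, rfl⟩ := (mem_S M).mp hb
    exact C_ne_empty M σ.1
  · rintro b hb c hc hbc t htb htc
    obtain ⟨σ, rfl⟩ := (mem_S M).mp hb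
    obtain ⟨τ, rfl⟩ := (mem_S M).mp hc
    exact hbc (by rw [eq_of_mem_C M htb htc])

theorem toSet_S : (S M).toSet = Set.range (fun σ : NESub n => C M σ.1) := by
  ext b
  simp only [ZFSet.mem_toSet, mem_S M, Set.mem_range]

theorem C_injective : Function.Injective (fun σ : NESub n => C M σ.1) := by
  intro σ τ h
  obtain ⟨t, ht⟩ := (ZFSet.eq_empty_or_nonempty (C M σ.1)).resolve_left (C_ne_empty M σ.1)
  have h' : C M σ.1 = C M τ.1 := h
  exact Subtype.ext (eq_of_mem_C M ht (h' ▸ ht))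

theorem card_sub : Fintype.card (NESub n) = 2 ^ n - 1 := by
  classical
  rw [Fintype.card_subtype]
  have : (Finset.univ.filter fun σ : Finset (Fin n) => σ.Nonempty) =
      Finset.univ.erase ∅ := by
    ext σ; simp [Finset.nonempty_iff_ne_empty]
  rw [this, Finset.card_erase_of_mem (Finset.mem_univ _)]
  simp [Fintype.card_finset]

theorem finite_toSet_S : (S M).toSet.Finite := by
  rw [toSet_S]; exact Set.finite_range _

theorem ncard_S : (S M).toSet.ncard = 2 ^ n - 1 := by
  rw [toSet_S, ← Set.image_univ, Set.ncard_image_of_injective _ (C_injective M),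
    Set.ncard_univ, Nat.card_eq_fintype_card, card_sub]

noncomputable def J (v : Fin n) : ZFSet :=
  ZFSet.sep (fun b => ∃ s, s ∈ b ∧ s ∈ M v) (S M)

theorem J_subset (v : Fin n) : J M v ⊆ S M := fun _ h => (ZFSet.mem_sep.mp h).1

theorem sUnion_J (v : Fin n) : ZFSet.sUnion (J M v) = M v := by
  classical
  ext t
  rw [ZFSet.mem_sUnion]
  constructor
  · rintro ⟨b, hb, htb⟩
    obtain ⟨hbS, s, hsb, hsv⟩ := ZFSet.mem_sep.mp hb
    obtain ⟨σ, rfl⟩ := (mem_S M).mp hbS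
    exact (mem_C_real M htb hsb hsv).2
  · intro ht
    set σt : Finset (Fin n) := Finset.univ.filter (fun i => t ∈ M i) with hσt
    have htB : t ∈ B M σt := (mem_B M).mpr ⟨(mem_U M).mpr ⟨v, ht⟩, by
      intro i; simp [hσt]⟩
    have hne : σt.Nonempty := ⟨v, by simp [hσt, ht]⟩
    have hCB : C M σt = B M σt := by
      unfold C; rw [if_neg]
      intro h; exact ZFSet.notMem_empty t (h ▸ htB)
    refine ⟨B M σt, ZFSet.mem_sep.mpr ⟨(mem_S M).mpr ⟨⟨σt, hne⟩, hCB⟩, t, htB, ht⟩, htB⟩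

end Main
end Stmt1Aux

/-- a BST⊗-formula with `n` distinct variables is satisfiable iff
it is satisfied by some partition with `2^n - 1` blocks. -/
theorem stmt1 {n : ℕ} (φ : Fmla (Fin n)) :
    (∃ M : Fin n → ZFSet, Fmla.Sat M φ) ↔
      ∃ S : ZFSet, IsPartition S ∧ S.toSet.Finite ∧ S.toSet.ncard = 2 ^ n - 1 ∧
        SatByPartition S φ := by
  constructor
  · rintro ⟨M0, hM0⟩
    obtain ⟨M, hM⟩ := Collapse.transfer φ M0 hM0 (Set.countable_univ)
    refine ⟨Stmt1Aux.S M, ⟨(Stmt1Aux.isPartition_S M).1, (Stmt1Aux.isPartition_S M).2⟩,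
      Stmt1Aux.finite_toSet_S M, Stmt1Aux.ncard_S M, Stmt1Aux.J M, Stmt1Aux.J_subset M, ?_⟩
    have h : (fun v => ZFSet.sUnion (Stmt1Aux.J M v)) = M := funext (Stmt1Aux.sUnion_J M)
    rw [h]; exact hM
  · rintro ⟨S, _, _, _, J, _, hSat⟩
    exact Collapse.transfer φ _ hSat (Set.countable_univ)

end BSTO
end

section
/- Let Σ be a partition and let 𝔍 : V → pow(Σ) be a partition assignment over a finite set V of variables. Then for all x, y, z ∈ V and for ⋆ ∈ {∪, \}: ⋃𝔍(x) = ⋃𝔍(y) ⋆ ⋃𝔍(z) holds if and only if 𝔍(x) = 𝔍(y) ⋆ 𝔍(z). -/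
namespace BSTO

/-- for a partition assignment `J` over a finite set of variables,
`⋃J(x) = ⋃J(y) ⋆ ⋃J(z)` iff `J(x) = J(y) ⋆ J(z)`, for `⋆ ∈ {∪, \}`. -/
theorem stmt2 {V : Type} [Finite V] (S : ZFSet) (hS : IsPartition S)
    (J : V → ZFSet) (hJ : ∀ v, J v ⊆ S) (x y z : V) :
    (ZFSet.sUnion (J x) = ZFSet.sUnion (J y) ∪ ZFSet.sUnion (J z) ↔ J x = J y ∪ J z) ∧
    (ZFSet.sUnion (J x) = ZFSet.sUnion (J y) \ ZFSet.sUnion (J z) ↔ J x = J y \ J z) := by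
  -- blocks containing a common element coincide
  have same : ∀ b, b ∈ S → ∀ c, c ∈ S → ∀ t, t ∈ b → t ∈ c → b = c := by
    intro b hb c hc t htb htc
    by_contra hne
    exact hS.2 b hb c hc hne t htb htc
  -- each block is nonempty
  have ne : ∀ b, b ∈ S → ∃ t, t ∈ b := by
    intro b hb
    by_contra h
    push_neg at h
    exact hS.1 b hb (ZFSet.eq_empty b |>.mpr h)
  constructor
  · constructor
    · intro h
      apply ZFSet.ext
      intro b
      simp only [ZFSet.mem_union]
      constructor
      · intro hbx
        obtain ⟨t, htb⟩ := ne b (hJ x hbx)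
        have : t ∈ ZFSet.sUnion (J y) ∪ ZFSet.sUnion (J z) := by
          rw [← h]; exact ZFSet.mem_sUnion.mpr ⟨b, hbx, htb⟩
        rcases ZFSet.mem_union.mp this with ht | ht
        · obtain ⟨c, hc, htc⟩ := ZFSet.mem_sUnion.mp ht
          exact Or.inl (same b (hJ x hbx) c (hJ y hc) t htb htc ▸ hc)
        · obtain ⟨c, hc, htc⟩ := ZFSet.mem_sUnion.mp ht
          exact Or.inr (same b (hJ x hbx) c (hJ z hc) t htb htc ▸ hc)
      · intro hb
        rcases hb with hb | hb
        · obtain ⟨t, htb⟩ := ne b (hJ y hb)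
          have : t ∈ ZFSet.sUnion (J x) := by
            rw [h]; exact ZFSet.mem_union.mpr (Or.inl (ZFSet.mem_sUnion.mpr ⟨b, hb, htb⟩))
          obtain ⟨c, hc, htc⟩ := ZFSet.mem_sUnion.mp this
          exact same b (hJ y hb) c (hJ x hc) t htb htc ▸ hc
        · obtain ⟨t, htb⟩ := ne b (hJ z hb)
          have : t ∈ ZFSet.sUnion (J x) := by
            rw [h]; exact ZFSet.mem_union.mpr (Or.inr (ZFSet.mem_sUnion.mpr ⟨b, hb, htb⟩))
          obtain ⟨c, hc, htc⟩ := ZFSet.mem_sUnion.mp this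
          exact same b (hJ z hb) c (hJ x hc) t htb htc ▸ hc
    · intro h
      apply ZFSet.ext
      intro t
      rw [h]
      simp only [ZFSet.mem_sUnion, ZFSet.mem_union]
      constructor
      · rintro ⟨b, hb | hb, htb⟩
        · exact Or.inl ⟨b, hb, htb⟩
        · exact Or.inr ⟨b, hb, htb⟩
      · rintro (⟨b, hb, htb⟩ | ⟨b, hb, htb⟩)
        · exact ⟨b, Or.inl hb, htb⟩
        · exact ⟨b, Or.inr hb, htb⟩
  · constructor
    · intro h
      apply ZFSet.ext
      intro b
      simp only [ZFSet.mem_sdiff]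
      constructor
      · intro hbx
        obtain ⟨t, htb⟩ := ne b (hJ x hbx)
        have ht : t ∈ ZFSet.sUnion (J y) \ ZFSet.sUnion (J z) := by
          rw [← h]; exact ZFSet.mem_sUnion.mpr ⟨b, hbx, htb⟩
        obtain ⟨hty, htz⟩ := ZFSet.mem_sdiff.mp ht
        obtain ⟨c, hc, htc⟩ := ZFSet.mem_sUnion.mp hty
        refine ⟨same b (hJ x hbx) c (hJ y hc) t htb htc ▸ hc, ?_⟩
        intro hbz
        exact htz (ZFSet.mem_sUnion.mpr ⟨b, hbz, htb⟩)
      · rintro ⟨hby, hbz⟩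
        obtain ⟨t, htb⟩ := ne b (hJ y hby)
        have htz : t ∉ ZFSet.sUnion (J z) := by
          intro ht
          obtain ⟨c, hc, htc⟩ := ZFSet.mem_sUnion.mp ht
          exact hbz (same b (hJ y hby) c (hJ z hc) t htb htc ▸ hc)
        have : t ∈ ZFSet.sUnion (J x) := by
          rw [h]; exact ZFSet.mem_sdiff.mpr ⟨ZFSet.mem_sUnion.mpr ⟨b, hby, htb⟩, htz⟩
        obtain ⟨c, hc, htc⟩ := ZFSet.mem_sUnion.mp this
        exact same b (hJ y hby) c (hJ x hc) t htb htc ▸ hc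
    · intro h
      apply ZFSet.ext
      intro t
      rw [h]
      simp only [ZFSet.mem_sUnion, ZFSet.mem_sdiff]
      constructor
      · rintro ⟨b, ⟨hby, hbz⟩, htb⟩
        refine ⟨⟨b, hby, htb⟩, ?_⟩
        intro ht
        obtain ⟨c, hc, htc⟩ := ht
        exact hbz (same b (hJ y hby) c (hJ z hc) t htb htc ▸ hc)
      · rintro ⟨⟨b, hby, htb⟩, htz⟩
        refine ⟨b, ⟨hby, ?_⟩, htb⟩
        intro hbz
        exact htz (⟨b, hbz, htb⟩)

end BSTO
end

section
/- A BST-conjunction Φ over a finite set V of variables is satisfiable if and only if there exists a map 𝔉 : V → pow(pow⁺(V)) that fulfills Φ. -/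
namespace BSTO

/-- von Neumann natural numbers as ZF sets. -/
def natToZF : ℕ → ZFSet
  | 0 => ∅
  | n + 1 => insert (natToZF n) (natToZF n)

lemma natToZF_mem {m n : ℕ} (h : m < n) : natToZF m ∈ natToZF n := by
  induction n with
  | zero => omega
  | succ k ih =>
    rcases Nat.lt_succ_iff_lt_or_eq.mp h with h' | h'
    · exact ZFSet.mem_insert_iff.mpr (Or.inr (ih h'))
    · subst h'; exact ZFSet.mem_insert _ _

lemma natToZF_inj : Function.Injective natToZF := by
  intro m n h
  by_contra hne
  rcases Nat.lt_or_ge m n with hlt | hge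
  · exact ZFSet.mem_irrefl _ (h ▸ natToZF_mem hlt)
  · exact ZFSet.mem_irrefl _ (h ▸ natToZF_mem (lt_of_le_of_ne hge (Ne.symm hne)))

lemma natToZF_mem_omega (n : ℕ) : natToZF n ∈ ZFSet.omega := by
  induction n with
  | zero => exact ZFSet.omega_zero
  | succ k ih => exact ZFSet.omega_succ ih

/-- a BST-conjunction over a finite set `V` of variables is satisfiable
iff there is a fulfilling map `F : V → pow(pow⁺ V)`. -/
theorem stmt4 {V : Type} [Finite V] (Φ : List (BSTLit V)) :
    (∃ M : V → ZFSet, ∀ l ∈ Φ, BSTLit.Sat M l) ↔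
      ∃ F : V → Set (Set V), (∀ v, ∀ s ∈ F v, s.Nonempty) ∧
        ∀ l ∈ Φ, BSTLit.FulfilledBy F l := by
  constructor
  · rintro ⟨M, hM⟩
    -- place of an element: the set of variables whose value contains it
    set π : ZFSet → Set V := fun a => {v | a ∈ M v} with hπ
    refine ⟨fun v => {s | ∃ a, a ∈ M v ∧ s = π a}, ?_, ?_⟩
    · rintro v s ⟨a, ha, rfl⟩
      exact ⟨v, ha⟩
    · intro l hl
      have hsat := hM l hl
      cases l with
      | eqUnion x y z =>
        simp only [BSTLit.Sat] at hsat
        ext s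
        simp only [Set.mem_setOf_eq, Set.mem_union, hsat, ZFSet.mem_union]
        constructor
        · rintro ⟨a, ha | ha, rfl⟩
          · exact Or.inl ⟨a, ha, rfl⟩
          · exact Or.inr ⟨a, ha, rfl⟩
        · rintro (⟨a, ha, rfl⟩ | ⟨a, ha, rfl⟩)
          · exact ⟨a, Or.inl ha, rfl⟩
          · exact ⟨a, Or.inr ha, rfl⟩
      | eqDiff x y z =>
        simp only [BSTLit.Sat] at hsat
        ext s
        simp only [Set.mem_setOf_eq, Set.mem_diff, hsat, ZFSet.mem_sdiff]
        constructor
        · rintro ⟨a, ⟨hay, haz⟩, rfl⟩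
          refine ⟨⟨a, hay, rfl⟩, ?_⟩
          rintro ⟨a', ha', heq⟩
          have : z ∈ π a' := ha'
          rw [← heq] at this
          exact haz this
        · rintro ⟨⟨a, hay, rfl⟩, hnz⟩
          refine ⟨a, ⟨hay, fun haz => hnz ⟨a, haz, rfl⟩⟩, rfl⟩
      | ne x y =>
        simp only [BSTLit.Sat] at hsat
        simp only [BSTLit.FulfilledBy]
        intro heq
        apply hsat
        ext a
        constructor
        · intro hax
          have : π a ∈ {s | ∃ a', a' ∈ M x ∧ s = π a'} := ⟨a, hax, rfl⟩
          rw [heq] at this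
          obtain ⟨a', ha', heq'⟩ := this
          have : y ∈ π a' := ha'
          rw [← heq'] at this
          exact this
        · intro hay
          have : π a ∈ {s | ∃ a', a' ∈ M y ∧ s = π a'} := ⟨a, hay, rfl⟩
          rw [← heq] at this
          obtain ⟨a', ha', heq'⟩ := this
          have : x ∈ π a' := ha'
          rw [← heq'] at this
          exact this
  · rintro ⟨F, -, hF⟩
    -- code the subsets of V injectively into ZF sets
    have : Countable (Set V) := Finite.to_countable
    obtain ⟨f, hf⟩ := exists_injective_nat (Set V)
    set code : Set V → ZFSet := fun s => natToZF (f s) with hcode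
    have hcode_inj : Function.Injective code := fun s t h => hf (natToZF_inj h)
    set M : V → ZFSet := fun v => ZFSet.omega.sep (fun a => ∃ s ∈ F v, a = code s)
      with hMdef
    have hmem : ∀ v (s : Set V), code s ∈ M v ↔ s ∈ F v := by
      intro v s
      simp only [hMdef, ZFSet.mem_sep]
      constructor
      · rintro ⟨-, t, ht, heq⟩
        rwa [hcode_inj heq]
      · intro hs
        exact ⟨natToZF_mem_omega _, s, hs, rfl⟩
    have hmem' : ∀ v a, a ∈ M v ↔ ∃ s ∈ F v, a = code s := by
      intro v a
      simp only [hMdef, ZFSet.mem_sep]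
      constructor
      · rintro ⟨-, h⟩; exact h
      · rintro ⟨s, hs, rfl⟩; exact ⟨natToZF_mem_omega _, s, hs, rfl⟩
    refine ⟨M, fun l hl => ?_⟩
    have hful := hF l hl
    cases l with
    | eqUnion x y z =>
      simp only [BSTLit.FulfilledBy] at hful
      simp only [BSTLit.Sat]
      ext a
      simp only [ZFSet.mem_union, hmem', hful, Set.mem_union]
      constructor
      · rintro ⟨s, hs | hs, rfl⟩
        · exact Or.inl ⟨s, hs, rfl⟩
        · exact Or.inr ⟨s, hs, rfl⟩
      · rintro (⟨s, hs, rfl⟩ | ⟨s, hs, rfl⟩)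
        · exact ⟨s, Or.inl hs, rfl⟩
        · exact ⟨s, Or.inr hs, rfl⟩
    | eqDiff x y z =>
      simp only [BSTLit.FulfilledBy] at hful
      simp only [BSTLit.Sat]
      ext a
      simp only [ZFSet.mem_sdiff, hmem', hful, Set.mem_diff]
      constructor
      · rintro ⟨s, ⟨hsy, hsz⟩, rfl⟩
        refine ⟨⟨s, hsy, rfl⟩, ?_⟩
        rintro ⟨t, ht, heq⟩
        rw [hcode_inj heq] at hsz
        exact hsz ht
      · rintro ⟨⟨s, hsy, rfl⟩, hnz⟩
        exact ⟨s, ⟨hsy, fun hsz => hnz ⟨s, hsz, rfl⟩⟩, rfl⟩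
    | ne x y =>
      simp only [BSTLit.FulfilledBy] at hful
      simp only [BSTLit.Sat]
      intro heq
      apply hful
      ext s
      rw [← hmem x s, ← hmem y s, heq]

end BSTO
end

section
/- A BST-conjunction involving n distinct variables is satisfiable if and only if it is satisfied by every partition of size n − 1. -/
namespace BSTO

/-! ### Auxiliary material for Statement 6 -/

section Stmt6Aux

universe w

/-- von Neumann numerals. -/
noncomputable def vN : ℕ → ZFSet.{w}
  | 0 => ∅
  | k + 1 => insert (vN k) (vN k)

lemma vN_mem {i j : ℕ} (h : i < j) : vN i ∈ vN j := by
  induction j with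
  | zero => omega
  | succ k ih =>
    show vN i ∈ insert (vN k) (vN k)
    rw [ZFSet.mem_insert_iff]
    rcases Nat.lt_succ_iff_lt_or_eq.1 h with h' | h'
    · exact Or.inr (ih h')
    · exact Or.inl (by rw [h'])

lemma vN_inj : Function.Injective vN := by
  intro i j h
  by_contra hne
  rcases lt_or_gt_of_ne hne with hlt | hlt
  · have := vN_mem hlt
    rw [h] at this
    exact ZFSet.mem_irrefl (vN j) this
  · have := vN_mem hlt
    rw [← h] at this
    exact ZFSet.mem_irrefl (vN i) this

lemma zf_singleton_inj : Function.Injective (fun a : ZFSet => ({a} : ZFSet)) := by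
  intro a b h
  have h' : ({a} : ZFSet) = ({b} : ZFSet) := h
  have : a ∈ ({b} : ZFSet) := by
    rw [← h']; exact ZFSet.mem_singleton.2 rfl
  exact ZFSet.mem_singleton.1 this

/-- The standard partition of size `m`: singletons of von Neumann numerals. -/
noncomputable def stdPart (m : ℕ) : ZFSet.{w} :=
  ZFSet.range (fun i : Fin m => ({vN i} : ZFSet))

lemma mem_stdPart {m : ℕ} {x : ZFSet} : x ∈ stdPart m ↔ ∃ i : Fin m, x = {vN i} := by
  simp only [stdPart, ZFSet.mem_range, Set.mem_range]
  exact ⟨fun ⟨i, h⟩ => ⟨i, h.symm⟩, fun ⟨i, h⟩ => ⟨i, h.symm⟩⟩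

lemma stdPart_isPartition (m : ℕ) : IsPartition (stdPart m) := by
  constructor
  · intro b hb
    obtain ⟨i, rfl⟩ := mem_stdPart.1 hb
    intro h
    exact ZFSet.notMem_empty (vN i) (h ▸ ZFSet.mem_singleton.2 rfl)
  · intro b hb c hc hbc t htb htc
    obtain ⟨i, rfl⟩ := mem_stdPart.1 hb
    obtain ⟨j, rfl⟩ := mem_stdPart.1 hc
    rw [ZFSet.mem_singleton] at htb htc
    exact hbc (congrArg (fun a : ZFSet => ({a} : ZFSet)) (htb.symm.trans htc))

lemma stdPart_finite (m : ℕ) : (stdPart m).toSet.Finite := by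
  show (SetLike.coe (stdPart m) : Set _).Finite
  rw [stdPart, ZFSet.coe_range]
  exact Set.finite_range _

lemma stdPart_ncard (m : ℕ) : (stdPart m).toSet.ncard = m := by
  have hinj : Function.Injective (fun i : Fin m => ({vN i} : ZFSet)) := by
    intro i j h
    exact Fin.val_injective (vN_inj (zf_singleton_inj h))
  show (SetLike.coe (stdPart m) : Set _).ncard = m
  rw [stdPart, ZFSet.coe_range, ← Set.image_univ, Set.ncard_image_of_injective _ hinj,
    Set.ncard_univ, Nat.card_eq_fintype_card, Fintype.card_fin]

/-- Splitting lemma: a finite family of `C.card` distinct ZFC sets can be pairwise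
separated by at most `C.card - 1` elements. -/
lemma sep_aux : ∀ (k : ℕ) (C : Finset ZFSet), C.card ≤ k →
    ∃ W : Finset ZFSet, W.card ≤ C.card - 1 ∧
      ∀ x ∈ C, ∀ y ∈ C, x ≠ y → ∃ a ∈ W, (a ∈ x ∧ a ∉ y) ∨ (a ∈ y ∧ a ∉ x) := by
  intro k
  induction k with
  | zero =>
    intro C hC
    refine ⟨∅, by simp, ?_⟩
    intro x hx
    have : C = ∅ := Finset.card_eq_zero.1 (Nat.le_zero.1 hC)
    simp [this] at hx
  | succ k ih =>
    intro C hC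
    classical
    by_cases h1 : C.card ≤ 1
    · refine ⟨∅, by simp, ?_⟩
      intro x hx y hy hxy
      exact absurd (Finset.card_le_one.1 h1 x hx y hy) hxy
    · obtain ⟨x, hx, y, hy, hxy⟩ := Finset.one_lt_card.1 (not_le.1 h1)
      have hsep : ∃ a : ZFSet, (a ∈ x ∧ a ∉ y) ∨ (a ∈ y ∧ a ∉ x) := by
        by_contra hcon
        push_neg at hcon
        refine hxy (ZFSet.ext fun a => ?_)
        have := hcon a
        tauto
      obtain ⟨a, ha⟩ := hsep
      set C₁ := C.filter (fun c => a ∈ c) with hC₁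
      set C₂ := C.filter (fun c => ¬ a ∈ c) with hC₂
      have hcards : C₁.card + C₂.card = C.card :=
        Finset.card_filter_add_card_filter_not _
      have h1pos : 0 < C₁.card := by
        rcases ha with ⟨h', _⟩ | ⟨h', _⟩
        · exact Finset.card_pos.2 ⟨x, Finset.mem_filter.2 ⟨hx, h'⟩⟩
        · exact Finset.card_pos.2 ⟨y, Finset.mem_filter.2 ⟨hy, h'⟩⟩
      have h2pos : 0 < C₂.card := by
        rcases ha with ⟨_, h'⟩ | ⟨_, h'⟩
        · exact Finset.card_pos.2 ⟨y, Finset.mem_filter.2 ⟨hy, h'⟩⟩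
        · exact Finset.card_pos.2 ⟨x, Finset.mem_filter.2 ⟨hx, h'⟩⟩
      obtain ⟨W₁, hW₁c, hW₁⟩ := ih C₁ (by omega)
      obtain ⟨W₂, hW₂c, hW₂⟩ := ih C₂ (by omega)
      refine ⟨insert a (W₁ ∪ W₂), ?_, ?_⟩
      · have hi := Finset.card_insert_le a (W₁ ∪ W₂)
        have hu := Finset.card_union_le W₁ W₂
        omega
      · intro u hu v hv huv
        by_cases hua : a ∈ u <;> by_cases hva : a ∈ v
        · obtain ⟨b, hb, hbs⟩ := hW₁ u (Finset.mem_filter.2 ⟨hu, hua⟩)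
            v (Finset.mem_filter.2 ⟨hv, hva⟩) huv
          exact ⟨b, Finset.mem_insert.2 (Or.inr (Finset.mem_union.2 (Or.inl hb))), hbs⟩
        · exact ⟨a, Finset.mem_insert_self _ _, Or.inl ⟨hua, hva⟩⟩
        · exact ⟨a, Finset.mem_insert_self _ _, Or.inr ⟨hva, hua⟩⟩
        · obtain ⟨b, hb, hbs⟩ := hW₂ u (Finset.mem_filter.2 ⟨hu, hua⟩)
            v (Finset.mem_filter.2 ⟨hv, hva⟩) huv
          exact ⟨b, Finset.mem_insert.2 (Or.inr (Finset.mem_union.2 (Or.inr hb))), hbs⟩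

universe u v

/-- An injection of a smaller finset into a larger one. -/
lemma exists_inj_finset (s : Finset ZFSet.{u}) (t : Finset ZFSet.{v}) (h : s.card ≤ t.card) :
    ∃ f : ZFSet.{u} → ZFSet.{v}, Set.InjOn f ↑s ∧ ∀ a ∈ s, f a ∈ t := by
  classical
  refine ⟨fun a => if h' : a ∈ s then
      ((t.equivFin.symm (Fin.castLE h (s.equivFin ⟨a, h'⟩)) : t) : ZFSet) else ∅, ?_, ?_⟩
  · intro a ha b hb hab
    rw [Finset.mem_coe] at ha hb
    simp only [dif_pos ha, dif_pos hb] at hab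
    have h1 := t.equivFin.symm.injective (Subtype.coe_injective hab)
    have h2 := Fin.castLE_injective h h1
    have h3 := s.equivFin.injective h2
    exact congrArg Subtype.val h3
  · intro a ha
    simp only [dif_pos ha]
    exact (t.equivFin.symm (Fin.castLE h (s.equivFin ⟨a, ha⟩))).2

lemma zf_sUnion_union (u v : ZFSet) :
    ZFSet.sUnion (u ∪ v) = ZFSet.sUnion u ∪ ZFSet.sUnion v := by
  apply ZFSet.ext; intro t
  simp only [ZFSet.mem_sUnion, ZFSet.mem_union]
  constructor
  · rintro ⟨z, hz | hz, ht⟩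
    exacts [Or.inl ⟨z, hz, ht⟩, Or.inr ⟨z, hz, ht⟩]
  · rintro (⟨z, hz, ht⟩ | ⟨z, hz, ht⟩)
    exacts [⟨z, Or.inl hz, ht⟩, ⟨z, Or.inr hz, ht⟩]

lemma zf_sUnion_diff {S u v : ZFSet} (hS : IsPartition S) (hu : u ⊆ S) (hv : v ⊆ S) :
    ZFSet.sUnion (u \ v) = ZFSet.sUnion u \ ZFSet.sUnion v := by
  apply ZFSet.ext; intro t
  simp only [ZFSet.mem_sUnion, ZFSet.mem_sdiff]
  constructor
  · rintro ⟨b, ⟨hbu, hbv⟩, htb⟩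
    refine ⟨⟨b, hbu, htb⟩, ?_⟩
    rintro ⟨c, hcv, htc⟩
    by_cases hbc : b = c
    · exact hbv (hbc ▸ hcv)
    · exact hS.2 b (hu hbu) c (hv hcv) hbc t htb htc
  · rintro ⟨⟨b, hbu, htb⟩, hnv⟩
    exact ⟨b, ⟨hbu, fun hbv => hnv ⟨b, hbv, htb⟩⟩, htb⟩

lemma zf_sUnion_ne_aux {S u v b : ZFSet} (hS : IsPartition S) (hv : v ⊆ S)
    (hbS : b ∈ S) (hbu : b ∈ u) (hbv : b ∉ v) : ZFSet.sUnion u ≠ ZFSet.sUnion v := by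
  have hbne : b ≠ ∅ := hS.1 b hbS
  have hex : ∃ t, t ∈ b := by
    by_contra h
    push_neg at h
    exact hbne (ZFSet.ext fun t =>
      ⟨fun ht => absurd ht (h t), fun ht => absurd ht (ZFSet.notMem_empty t)⟩)
  obtain ⟨t, htb⟩ := hex
  intro heq
  have htu : t ∈ ZFSet.sUnion u := ZFSet.mem_sUnion.2 ⟨b, hbu, htb⟩
  rw [heq] at htu
  obtain ⟨c, hcv, htc⟩ := ZFSet.mem_sUnion.1 htu
  by_cases hbc : b = c
  · exact hbv (hbc ▸ hcv)
  · exact hS.2 b hbS c (hv hcv) hbc t htb htc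

lemma vN_fin_inj {m : ℕ} {i j : Fin m} (h : vN i = vN j) : i = j :=
  Fin.val_injective (vN_inj h)

lemma mem_sUnion_of_subset_stdPart {m : ℕ} {J : ZFSet} (hJ : J ⊆ stdPart m) (t : ZFSet) :
    t ∈ ZFSet.sUnion J ↔ ∃ i : Fin m, ({vN i} : ZFSet) ∈ J ∧ t = vN i := by
  rw [ZFSet.mem_sUnion]
  constructor
  · rintro ⟨b, hbJ, htb⟩
    obtain ⟨i, rfl⟩ := mem_stdPart.1 (hJ hbJ)
    exact ⟨i, hbJ, ZFSet.mem_singleton.1 htb⟩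
  · rintro ⟨i, hi, rfl⟩
    exact ⟨{vN i}, hi, ZFSet.mem_singleton.2 rfl⟩

lemma vN_mem_sUnion {m : ℕ} {J : ZFSet} (hJ : J ⊆ stdPart m) (i : Fin m) :
    vN i ∈ ZFSet.sUnion J ↔ ({vN i} : ZFSet) ∈ J := by
  rw [mem_sUnion_of_subset_stdPart hJ]
  constructor
  · rintro ⟨j, hj, hij⟩
    obtain rfl := vN_fin_inj hij
    exact hj
  · intro h
    exact ⟨i, h, rfl⟩

lemma sUnion_eq_of_subset_stdPart {m : ℕ} {J K : ZFSet} (hJ : J ⊆ stdPart m)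
    (hK : K ⊆ stdPart m) (h : ∀ i : Fin m, ({vN i} : ZFSet) ∈ J ↔ ({vN i} : ZFSet) ∈ K) :
    ZFSet.sUnion J = ZFSet.sUnion K := by
  apply ZFSet.ext; intro t
  rw [mem_sUnion_of_subset_stdPart hJ, mem_sUnion_of_subset_stdPart hK]
  constructor
  · rintro ⟨i, hi, rfl⟩
    exact ⟨i, (h i).1 hi, rfl⟩
  · rintro ⟨i, hi, rfl⟩
    exact ⟨i, (h i).2 hi, rfl⟩

end Stmt6Aux

/-- a BST-conjunction with `n` distinct variables is satisfiable iff
it is satisfied by every partition of size `n - 1`. -/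
theorem stmt6 {n : ℕ} (Φ : List (BSTLit (Fin n))) :
    (∃ M : Fin n → ZFSet, ∀ l ∈ Φ, BSTLit.Sat M l) ↔
      ∀ S : ZFSet, IsPartition S → S.toSet.Finite → S.toSet.ncard = n - 1 →
        ∃ J : Fin n → ZFSet, (∀ v, J v ⊆ S) ∧
          ∀ l ∈ Φ, BSTLit.Sat (fun v => ZFSet.sUnion (J v)) l := by
  classical
  constructor
  · rintro ⟨M, hM⟩ S hPart hFin hcard
    obtain ⟨W, hWcard, hWsep⟩ :=
      sep_aux (Finset.image M Finset.univ).card (Finset.image M Finset.univ) le_rfl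
    have hCn : (Finset.image M Finset.univ).card ≤ n := by
      refine le_trans Finset.card_image_le ?_
      simp
    have hSfin : hFin.toFinset.card = n - 1 := by
      rw [← Set.ncard_eq_toFinset_card _ hFin, hcard]
    obtain ⟨ι, hι, hιS⟩ := exists_inj_finset W hFin.toFinset (by omega)
    have hιS' : ∀ a ∈ W, ι a ∈ S := fun a ha => by
      have := hιS a ha
      rwa [Set.Finite.mem_toFinset] at this
    set J : Fin n → ZFSet := fun v => ZFSet.sep (fun b => ∃ a ∈ W, a ∈ M v ∧ ι a = b) S with hJ
    have hmemJ : ∀ v b, b ∈ J v ↔ ∃ a ∈ W, a ∈ M v ∧ ι a = b := by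
      intro v b
      rw [hJ]
      rw [ZFSet.mem_sep]
      constructor
      · exact And.right
      · rintro ⟨a, ha, ham, rfl⟩
        exact ⟨hιS' a ha, a, ha, ham, rfl⟩
    have hJS : ∀ v, J v ⊆ S := fun v b hb => (ZFSet.mem_sep.1 hb).1
    refine ⟨J, hJS, ?_⟩
    intro l hl
    have hsat := hM l hl
    cases l with
    | eqUnion x y z =>
      have hxyz : M x = M y ∪ M z := hsat
      have hJ' : J x = J y ∪ J z := by
        apply ZFSet.ext; intro b
        rw [ZFSet.mem_union, hmemJ, hmemJ, hmemJ]
        constructor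
        · rintro ⟨a, ha, ham, rfl⟩
          rw [hxyz, ZFSet.mem_union] at ham
          rcases ham with h | h
          exacts [Or.inl ⟨a, ha, h, rfl⟩, Or.inr ⟨a, ha, h, rfl⟩]
        · rintro (⟨a, ha, ham, rfl⟩ | ⟨a, ha, ham, rfl⟩)
          · exact ⟨a, ha, by rw [hxyz, ZFSet.mem_union]; exact Or.inl ham, rfl⟩
          · exact ⟨a, ha, by rw [hxyz, ZFSet.mem_union]; exact Or.inr ham, rfl⟩
      show ZFSet.sUnion (J x) = ZFSet.sUnion (J y) ∪ ZFSet.sUnion (J z)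
      rw [hJ', zf_sUnion_union]
    | eqDiff x y z =>
      have hxyz : M x = M y \ M z := hsat
      have hJ' : J x = J y \ J z := by
        apply ZFSet.ext; intro b
        rw [ZFSet.mem_sdiff, hmemJ, hmemJ, hmemJ]
        constructor
        · rintro ⟨a, ha, ham, rfl⟩
          rw [hxyz, ZFSet.mem_sdiff] at ham
          refine ⟨⟨a, ha, ham.1, rfl⟩, ?_⟩
          rintro ⟨a', ha', ham', heq⟩
          have : a' = a := hι (Finset.mem_coe.2 ha') (Finset.mem_coe.2 ha) heq
          exact ham.2 (this ▸ ham')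
        · rintro ⟨⟨a, ha, ham, rfl⟩, hnz⟩
          refine ⟨a, ha, ?_, rfl⟩
          rw [hxyz, ZFSet.mem_sdiff]
          exact ⟨ham, fun hz => hnz ⟨a, ha, hz, rfl⟩⟩
      show ZFSet.sUnion (J x) = ZFSet.sUnion (J y) \ ZFSet.sUnion (J z)
      rw [hJ', zf_sUnion_diff hPart (hJS y) (hJS z)]
    | ne x y =>
      have hxy : M x ≠ M y := hsat
      obtain ⟨a, haW, hsep⟩ := hWsep (M x) (Finset.mem_image_of_mem M (Finset.mem_univ x))
        (M y) (Finset.mem_image_of_mem M (Finset.mem_univ y)) hxy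
      show ZFSet.sUnion (J x) ≠ ZFSet.sUnion (J y)
      rcases hsep with ⟨hax, hay⟩ | ⟨hay, hax⟩
      · refine zf_sUnion_ne_aux hPart (hJS y) (hιS' a haW)
          ((hmemJ x _).2 ⟨a, haW, hax, rfl⟩) ?_
        intro hmem
        obtain ⟨a', ha', ham', heq⟩ := (hmemJ y _).1 hmem
        have : a' = a := hι (Finset.mem_coe.2 ha') (Finset.mem_coe.2 haW) heq
        exact hay (this ▸ ham')
      · refine Ne.symm (zf_sUnion_ne_aux hPart (hJS x) (hιS' a haW)
          ((hmemJ y _).2 ⟨a, haW, hay, rfl⟩) ?_)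
        intro hmem
        obtain ⟨a', ha', ham', heq⟩ := (hmemJ x _).1 hmem
        have : a' = a := hι (Finset.mem_coe.2 ha') (Finset.mem_coe.2 haW) heq
        exact hax (this ▸ ham')
  · intro h
    obtain ⟨J, hJS, hJ⟩ := h (stdPart (n - 1)) (stdPart_isPartition _)
      (stdPart_finite _) (stdPart_ncard _)
    set P : Fin n → Fin (n - 1) → Prop := fun v i => ({vN i} : ZFSet) ∈ J v with hP
    set J' : Fin n → ZFSet := fun v =>
      ZFSet.sep (fun b => ∃ i : Fin (n - 1), P v i ∧ b = {vN i}) (stdPart (n - 1)) with hJ'def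
    have hJ'S : ∀ v, J' v ⊆ stdPart (n - 1) := fun v b hb => (ZFSet.mem_sep.1 hb).1
    have hPJ' : ∀ v (i : Fin (n - 1)), ({vN i} : ZFSet) ∈ J' v ↔ P v i := by
      intro v i
      rw [hJ'def]
      rw [ZFSet.mem_sep]
      constructor
      · rintro ⟨-, j, hj, hij⟩
        obtain rfl := vN_fin_inj (zf_singleton_inj hij)
        exact hj
      · intro hp
        exact ⟨mem_stdPart.2 ⟨i, rfl⟩, i, hp, rfl⟩
    have hmem1 : ∀ v (i : Fin (n - 1)), vN i ∈ ZFSet.sUnion (J' v) ↔ P v i :=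
      fun v i => (vN_mem_sUnion (hJ'S v) i).trans (hPJ' v i)
    have hmem2 : ∀ v (i : Fin (n - 1)), vN i ∈ ZFSet.sUnion (J v) ↔ P v i :=
      fun v i => vN_mem_sUnion (hJS v) i
    refine ⟨fun v => ZFSet.sUnion (J' v), ?_⟩
    intro l hl
    have hsat := hJ l hl
    cases l with
    | eqUnion x y z =>
      have hxyz : ZFSet.sUnion (J x) = ZFSet.sUnion (J y) ∪ ZFSet.sUnion (J z) := hsat
      have key : ∀ i : Fin (n - 1), P x i ↔ P y i ∨ P z i := by
        intro i
        rw [← hmem2 x i, ← hmem2 y i, ← hmem2 z i, hxyz, ZFSet.mem_union]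
      show ZFSet.sUnion (J' x) = ZFSet.sUnion (J' y) ∪ ZFSet.sUnion (J' z)
      apply ZFSet.ext; intro t
      rw [ZFSet.mem_union, mem_sUnion_of_subset_stdPart (hJ'S x),
        mem_sUnion_of_subset_stdPart (hJ'S y), mem_sUnion_of_subset_stdPart (hJ'S z)]
      constructor
      · rintro ⟨i, hi, rfl⟩
        rcases (key i).1 ((hPJ' x i).1 hi) with h' | h'
        · exact Or.inl ⟨i, (hPJ' y i).2 h', rfl⟩
        · exact Or.inr ⟨i, (hPJ' z i).2 h', rfl⟩
      · rintro (⟨i, hi, rfl⟩ | ⟨i, hi, rfl⟩)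
        · exact ⟨i, (hPJ' x i).2 ((key i).2 (Or.inl ((hPJ' y i).1 hi))), rfl⟩
        · exact ⟨i, (hPJ' x i).2 ((key i).2 (Or.inr ((hPJ' z i).1 hi))), rfl⟩
    | eqDiff x y z =>
      have hxyz : ZFSet.sUnion (J x) = ZFSet.sUnion (J y) \ ZFSet.sUnion (J z) := hsat
      have key : ∀ i : Fin (n - 1), P x i ↔ P y i ∧ ¬ P z i := by
        intro i
        rw [← hmem2 x i, ← hmem2 y i, ← hmem2 z i, hxyz, ZFSet.mem_sdiff]
      show ZFSet.sUnion (J' x) = ZFSet.sUnion (J' y) \ ZFSet.sUnion (J' z)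
      apply ZFSet.ext; intro t
      rw [ZFSet.mem_sdiff, mem_sUnion_of_subset_stdPart (hJ'S x),
        mem_sUnion_of_subset_stdPart (hJ'S y), mem_sUnion_of_subset_stdPart (hJ'S z)]
      constructor
      · rintro ⟨i, hi, rfl⟩
        have hp := (key i).1 ((hPJ' x i).1 hi)
        refine ⟨⟨i, (hPJ' y i).2 hp.1, rfl⟩, ?_⟩
        rintro ⟨j, hj, hij⟩
        obtain rfl := vN_fin_inj hij
        exact hp.2 ((hPJ' z i).1 hj)
      · rintro ⟨⟨i, hi, rfl⟩, hn⟩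
        refine ⟨i, (hPJ' x i).2 ((key i).2 ⟨(hPJ' y i).1 hi, ?_⟩), rfl⟩
        intro hz
        exact hn ⟨i, (hPJ' z i).2 hz, rfl⟩
    | ne x y =>
      have hxy : ZFSet.sUnion (J x) ≠ ZFSet.sUnion (J y) := hsat
      have key : ∃ i : Fin (n - 1), ¬ (P x i ↔ P y i) := by
        by_contra hc
        push_neg at hc
        exact hxy (sUnion_eq_of_subset_stdPart (hJS x) (hJS y) hc)
      obtain ⟨i, hi⟩ := key
      show ZFSet.sUnion (J' x) ≠ ZFSet.sUnion (J' y)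
      intro heq
      apply hi
      rw [← hmem1 x i, ← hmem1 y i, heq]

end BSTO
end

section
/- A BST-conjunction over a finite set V of variables is satisfiable if and only if it is fulfilled by a map 𝔉 : V → pow(pow⁺(V)) such that the cardinality of ⋃𝔉[V] (the set of all blocks used by 𝔉) is at most |V| − 1. -/
namespace BSTO

/-- von Neumann numerals in `ZFSet`. -/
private def natZ : ℕ → ZFSet
  | 0 => ∅
  | n+1 => insert (natZ n) (natZ n)

private lemma natZ_mem_omega (n : ℕ) : natZ n ∈ ZFSet.omega := by
  induction n with
  | zero => exact ZFSet.omega_zero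
  | succ n ih => exact ZFSet.omega_succ ih

private lemma natZ_lt_mem {m n : ℕ} (h : m < n) : natZ m ∈ natZ n := by
  induction n with
  | zero => omega
  | succ n ih =>
    rcases Nat.lt_succ_iff_lt_or_eq.mp h with h | h
    · exact ZFSet.mem_insert_of_mem _ (ih h)
    · subst h; exact ZFSet.mem_insert _ _

private lemma natZ_inj : Function.Injective natZ := by
  intro m n h
  by_contra hne
  rcases Nat.lt_or_ge m n with hlt | hge
  · have := natZ_lt_mem hlt; rw [h] at this; exact ZFSet.mem_irrefl _ this
  · have hlt : n < m := lt_of_le_of_ne hge (Ne.symm hne)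
    have := natZ_lt_mem hlt; rw [← h] at this; exact ZFSet.mem_irrefl _ this

private lemma sep_lemma {V α : Type} (G : V → Set α) :
    ∀ (n : ℕ) (W : Finset V), W.card ≤ n → W.Nonempty →
      ∃ s : Finset α, s.card + 1 ≤ W.card ∧
        ∀ x ∈ W, ∀ y ∈ W, G x ∩ ↑s = G y ∩ ↑s → G x = G y := by
  classical
  intro n
  induction n with
  | zero =>
    intro W hW hne
    have := Finset.card_pos.mpr hne
    omega
  | succ n ih =>
    intro W hW hne
    by_cases hall : ∀ x ∈ W, ∀ y ∈ W, G x = G y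
    · exact ⟨∅, by simpa using Finset.card_pos.mpr hne,
        fun x hx y hy _ => hall x hx y hy⟩
    · push_neg at hall
      obtain ⟨x, hx, y, hy, hxy⟩ := hall
      have hex : ∃ a, ¬ (a ∈ G x ↔ a ∈ G y) := by
        by_contra hc
        push_neg at hc
        exact hxy (Set.ext hc)
      obtain ⟨a, ha⟩ := hex
      set W₁ := W.filter (fun v => a ∈ G v) with hW₁
      set W₂ := W.filter (fun v => a ∉ G v) with hW₂
      have hsum : W₁.card + W₂.card = W.card :=
        Finset.card_filter_add_card_filter_not (fun v => a ∈ G v)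
      have hne₁ : W₁.Nonempty := by
        by_cases hax : a ∈ G x
        · exact ⟨x, Finset.mem_filter.mpr ⟨hx, hax⟩⟩
        · have hay : a ∈ G y := by tauto
          exact ⟨y, Finset.mem_filter.mpr ⟨hy, hay⟩⟩
      have hne₂ : W₂.Nonempty := by
        by_cases hax : a ∈ G x
        · have hay : a ∉ G y := by tauto
          exact ⟨y, Finset.mem_filter.mpr ⟨hy, hay⟩⟩
        · exact ⟨x, Finset.mem_filter.mpr ⟨hx, hax⟩⟩
      have hc₁ : 0 < W₁.card := Finset.card_pos.mpr hne₁
      have hc₂ : 0 < W₂.card := Finset.card_pos.mpr hne₂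
      obtain ⟨s₁, hs₁c, hs₁⟩ := ih W₁ (by omega) hne₁
      obtain ⟨s₂, hs₂c, hs₂⟩ := ih W₂ (by omega) hne₂
      refine ⟨insert a (s₁ ∪ s₂), ?_, ?_⟩
      · have h1 := Finset.card_insert_le a (s₁ ∪ s₂)
        have h2 := Finset.card_union_le s₁ s₂
        omega
      · intro u hu v hv huv
        set s : Finset α := insert a (s₁ ∪ s₂) with hs
        have has : a ∈ (s : Set α) := by simp [hs]
        have hiff : a ∈ G u ↔ a ∈ G v := by
          constructor
          · intro h
            have : a ∈ G u ∩ ↑s := ⟨h, has⟩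
            rw [huv] at this; exact this.1
          · intro h
            have : a ∈ G v ∩ ↑s := ⟨h, has⟩
            rw [← huv] at this; exact this.1
        have key : ∀ (t : Finset α), (t : Set α) ⊆ ↑s →
            G u ∩ ↑t = G v ∩ ↑t := by
          intro t hts
          ext b
          constructor
          · rintro ⟨hb, hbt⟩
            have : b ∈ G u ∩ ↑s := ⟨hb, hts hbt⟩
            rw [huv] at this
            exact ⟨this.1, hbt⟩
          · rintro ⟨hb, hbt⟩
            have : b ∈ G v ∩ ↑s := ⟨hb, hts hbt⟩
            rw [← huv] at this
            exact ⟨this.1, hbt⟩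
        by_cases hau : a ∈ G u
        · have hav : a ∈ G v := hiff.mp hau
          exact hs₁ u (Finset.mem_filter.mpr ⟨hu, hau⟩) v (Finset.mem_filter.mpr ⟨hv, hav⟩)
            (key s₁ (by intro b hb; simp only [hs, Finset.coe_insert, Finset.coe_union,
              Set.mem_insert_iff, Set.mem_union, Finset.mem_coe] at hb ⊢; tauto))
        · have hav : a ∉ G v := fun h => hau (hiff.mpr h)
          exact hs₂ u (Finset.mem_filter.mpr ⟨hu, hau⟩) v (Finset.mem_filter.mpr ⟨hv, hav⟩)
            (key s₂ (by intro b hb; simp only [hs, Finset.coe_insert, Finset.coe_union,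
              Set.mem_insert_iff, Set.mem_union, Finset.mem_coe] at hb ⊢; tauto))

/-- a BST-conjunction over a finite `V` is satisfiable iff it is fulfilled
by a map `F` using at most `|V| - 1` blocks. -/
theorem stmt7 {V : Type} [Fintype V] (Φ : List (BSTLit V)) :
    (∃ M : V → ZFSet, ∀ l ∈ Φ, BSTLit.Sat M l) ↔
      ∃ F : V → Set (Set V), (∀ v, ∀ s ∈ F v, s.Nonempty) ∧
        (∀ l ∈ Φ, BSTLit.FulfilledBy F l) ∧ (⋃ v, F v).ncard ≤ Fintype.card V - 1 := by
  classical
  constructor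
  · rintro ⟨M, hM⟩
    rcases isEmpty_or_nonempty V with hV | hV
    · refine ⟨fun _ => ∅, by simp, ?_, by simp⟩
      intro l hl
      cases l with
      | eqUnion x y z => exact (hV.false x).elim
      | eqDiff x y z => exact (hV.false x).elim
      | ne x y => exact (hV.false x).elim
    · set G : V → Set (Set V) := fun v => {A | ∃ t : ZFSet, t ∈ M v ∧ A = {w | t ∈ M w}}
        with hGdef
      have hmemG : ∀ v A, A ∈ G v → v ∈ A := by
        rintro v A ⟨t, ht, rfl⟩; exact ht
      have hGful : ∀ l ∈ Φ, BSTLit.FulfilledBy G l := by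
        intro l hl
        have hsat := hM l hl
        cases l with
        | eqUnion x y z =>
          have sat : M x = M y ∪ M z := hsat
          show G x = G y ∪ G z
          ext A
          constructor
          · rintro ⟨t, ht, rfl⟩
            rw [sat, ZFSet.mem_union] at ht
            rcases ht with h | h
            · exact Or.inl ⟨t, h, rfl⟩
            · exact Or.inr ⟨t, h, rfl⟩
          · rintro (⟨t, ht, rfl⟩ | ⟨t, ht, rfl⟩) <;>
              exact ⟨t, by rw [sat, ZFSet.mem_union]; tauto, rfl⟩
        | eqDiff x y z =>
          have sat : M x = M y \ M z := hsat
          show G x = G y \ G z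
          ext A
          constructor
          · rintro ⟨t, ht, rfl⟩
            rw [sat, ZFSet.mem_sdiff] at ht
            refine ⟨⟨t, ht.1, rfl⟩, ?_⟩
            rintro ⟨t', ht', hA⟩
            have hz : z ∈ {w | t' ∈ M w} := ht'
            rw [← hA] at hz
            exact ht.2 hz
          · rintro ⟨⟨t, ht, rfl⟩, hnz⟩
            refine ⟨t, ?_, rfl⟩
            rw [sat, ZFSet.mem_sdiff]
            exact ⟨ht, fun hz => hnz ⟨t, hz, rfl⟩⟩
        | ne x y =>
          have sat : M x ≠ M y := hsat
          show G x ≠ G y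
          have hex : ∃ t, ¬ (t ∈ M x ↔ t ∈ M y) := by
            by_contra hc
            push_neg at hc
            exact sat (ZFSet.ext hc)
          obtain ⟨t, ht⟩ := hex
          intro heq
          by_cases hx : t ∈ M x
          · have hy : t ∉ M y := by tauto
            have hA : ({w | t ∈ M w} : Set V) ∈ G x := ⟨t, hx, rfl⟩
            rw [heq] at hA
            exact hy (hmemG y _ hA)
          · have hy : t ∈ M y := by tauto
            have hA : ({w | t ∈ M w} : Set V) ∈ G y := ⟨t, hy, rfl⟩
            rw [← heq] at hA
            exact hx (hmemG x _ hA)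
      obtain ⟨s, hscard, hsep⟩ := sep_lemma G (Fintype.card V) Finset.univ
        (le_of_eq Finset.card_univ) Finset.univ_nonempty
      refine ⟨fun v => G v ∩ ↑s, ?_, ?_, ?_⟩
      · rintro v A ⟨hA, -⟩
        exact ⟨v, hmemG v A hA⟩
      · intro l hl
        have hthis := hGful l hl
        cases l with
        | eqUnion x y z =>
          have h : G x = G y ∪ G z := hthis
          show G x ∩ ↑s = (G y ∩ ↑s) ∪ (G z ∩ ↑s)
          rw [h, Set.union_inter_distrib_right]
        | eqDiff x y z =>
          have h : G x = G y \ G z := hthis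
          show G x ∩ ↑s = (G y ∩ ↑s) \ (G z ∩ ↑s)
          rw [h]
          ext A
          simp only [Set.mem_inter_iff, Set.mem_diff]
          tauto
        | ne x y =>
          have h : G x ≠ G y := hthis
          exact fun heq => h (hsep x (Finset.mem_univ x) y (Finset.mem_univ y) heq)
      · show (⋃ v, G v ∩ ↑s).ncard ≤ Fintype.card V - 1
        have hsub : (⋃ v, G v ∩ ↑s) ⊆ ↑s := by
          intro A hA
          simp only [Set.mem_iUnion] at hA
          obtain ⟨v, -, hAs⟩ := hA
          exact hAs
        have hle := Set.ncard_le_ncard hsub s.finite_toSet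
        rw [Set.ncard_coe_finset] at hle
        rw [Finset.card_univ] at hscard
        omega
  · rintro ⟨F, hblk, hful, -⟩
    have hfin : Finite (Set V) := by
      have : Finite (V → Prop) := inferInstance
      exact this
    obtain ⟨n, ⟨e⟩⟩ := Finite.exists_equiv_fin (Set V)
    obtain ⟨ι, hinj, hω⟩ : ∃ ι : Set V → ZFSet, Function.Injective ι ∧
        ∀ A, ι A ∈ ZFSet.omega := by
      refine ⟨fun A => natZ (e A), ?_, fun A => natZ_mem_omega _⟩
      intro A B h
      exact e.injective (Fin.val_injective (natZ_inj h))
    obtain ⟨M, memM⟩ : ∃ M : V → ZFSet, ∀ v t, t ∈ M v ↔ ∃ A ∈ F v, t = ι A := by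
      refine ⟨fun v => ZFSet.sep (fun t => ∃ A ∈ F v, t = ι A) ZFSet.omega, fun v t => ?_⟩
      rw [ZFSet.mem_sep]
      constructor
      · exact fun h => h.2
      · rintro ⟨A, hA, rfl⟩
        exact ⟨hω A, A, hA, rfl⟩
    refine ⟨M, ?_⟩
    intro l hl
    have hthis := hful l hl
    cases l with
    | eqUnion x y z =>
      have h : F x = F y ∪ F z := hthis
      show M x = M y ∪ M z
      apply ZFSet.ext
      intro t
      rw [ZFSet.mem_union, memM, memM, memM, h]
      constructor
      · rintro ⟨A, hA | hA, rfl⟩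
        · exact Or.inl ⟨A, hA, rfl⟩
        · exact Or.inr ⟨A, hA, rfl⟩
      · rintro (⟨A, hA, rfl⟩ | ⟨A, hA, rfl⟩)
        · exact ⟨A, Or.inl hA, rfl⟩
        · exact ⟨A, Or.inr hA, rfl⟩
    | eqDiff x y z =>
      have h : F x = F y \ F z := hthis
      show M x = M y \ M z
      apply ZFSet.ext
      intro t
      rw [ZFSet.mem_sdiff, memM, memM, memM, h]
      constructor
      · rintro ⟨A, ⟨hAy, hAz⟩, rfl⟩
        refine ⟨⟨A, hAy, rfl⟩, ?_⟩
        rintro ⟨B, hB, hAB⟩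
        exact hAz (by rw [hinj hAB]; exact hB)
      · rintro ⟨⟨A, hA, rfl⟩, hnz⟩
        exact ⟨A, ⟨hA, fun hz => hnz ⟨A, hz, rfl⟩⟩, rfl⟩
    | ne x y =>
      have h : F x ≠ F y := hthis
      show M x ≠ M y
      intro heq
      apply h
      ext A
      constructor
      · intro hA
        have : ι A ∈ M x := (memM x (ι A)).mpr ⟨A, hA, rfl⟩
        rw [heq] at this
        obtain ⟨B, hB, hAB⟩ := (memM y (ι A)).mp this
        rwa [hinj hAB]
      · intro hA
        have : ι A ∈ M y := (memM y (ι A)).mpr ⟨A, hA, rfl⟩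
        rw [← heq] at this
        obtain ⟨B, hB, hAB⟩ := (memM x (ι A)).mp this
        rwa [hinj hAB]


end BSTO
end

section
/- Let Σ be a partition. For all collections ℬ, ℬ' of nonempty subsets of Σ of cardinality at most 2 (i.e., ℬ, ℬ' ⊆ Pow₁,₂(Σ)), one has ⋃ Pow*₁,₂[ℬ] = ⋃ Pow*₁,₂[ℬ'] if and only if ℬ = ℬ'. -/
namespace BSTO

lemma mem_pair {x p q : ZFSet} : x ∈ ({p, q} : ZFSet) ↔ x = p ∨ x = q := by
  simp [ZFSet.mem_insert_iff]

lemma same_block (S : ZFSet) (hS : IsPartition S) {p p' u : ZFSet}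
    (hp : p ∈ S) (hp' : p' ∈ S) (hu : u ∈ p) (hu' : u ∈ p') : p = p' := by
  by_contra h
  exact hS.2 p hp p' hp' h u hu hu'

lemma key (S : ZFSet) (hS : IsPartition S) {p q p' q' t : ZFSet}
    (hp : p ∈ S) (hq : q ∈ S) (hp' : p' ∈ S) (hq' : q' ∈ S)
    (ht : t ∈ powAst12 ({p, q} : ZFSet)) (ht' : t ∈ powAst12 ({p', q'} : ZFSet)) :
    ({p, q} : ZFSet) = ({p', q'} : ZFSet) := by
  obtain ⟨hsub, hmeet, -⟩ := ht
  obtain ⟨hsub', hmeet', -⟩ := ht'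
  have inblk : ∀ x, x ∈ ({p, q} : ZFSet) → x ∈ S := by
    intro x hx; rcases mem_pair.1 hx with rfl | rfl <;> assumption
  have inblk' : ∀ x, x ∈ ({p', q'} : ZFSet) → x ∈ S := by
    intro x hx; rcases mem_pair.1 hx with rfl | rfl <;> assumption
  have fwd : ∀ x, x ∈ ({p, q} : ZFSet) → x ∈ ({p', q'} : ZFSet) := by
    intro x hx
    obtain ⟨u, hut, hux⟩ := hmeet x hx
    obtain ⟨y, hy, huy⟩ := ZFSet.mem_sUnion.1 (hsub' hut)
    have := same_block S hS (inblk x hx) (inblk' y hy) hux huy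
    rwa [this]
  have bwd : ∀ x, x ∈ ({p', q'} : ZFSet) → x ∈ ({p, q} : ZFSet) := by
    intro x hx
    obtain ⟨u, hut, hux⟩ := hmeet' x hx
    obtain ⟨y, hy, huy⟩ := ZFSet.mem_sUnion.1 (hsub hut)
    have := same_block S hS (inblk' x hx) (inblk y hy) hux huy
    rwa [this]
  exact ZFSet.ext fun x => ⟨fwd x, bwd x⟩

lemma canonical (S : ZFSet) (hS : IsPartition S) {p q : ZFSet} (hp : p ∈ S) (hq : q ∈ S) :
    ∃ t, t ∈ powAst12 ({p, q} : ZFSet) := by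
  obtain ⟨u, hu⟩ := ZFSet.eq_empty_or_nonempty p |>.resolve_left (hS.1 p hp)
  obtain ⟨v, hv⟩ := ZFSet.eq_empty_or_nonempty q |>.resolve_left (hS.1 q hq)
  refine ⟨{u, v}, ?_, ?_, u, v, rfl⟩
  · intro w hw
    rcases mem_pair.1 hw with rfl | rfl
    · exact ZFSet.mem_sUnion.2 ⟨p, by simp [mem_pair], hu⟩
    · exact ZFSet.mem_sUnion.2 ⟨q, by simp [mem_pair], hv⟩
  · intro s hs
    rcases mem_pair.1 hs with rfl | rfl
    · exact ⟨u, by simp [mem_pair], hu⟩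
    · exact ⟨v, by simp [mem_pair], hv⟩

/-- injectivity of `Pow*₁,₂` on families of nonempty subsets of a
partition of cardinality at most 2. -/
theorem stmt8 (S : ZFSet) (hS : IsPartition S) (B B' : Set ZFSet)
    (hB : ∀ b ∈ B, ∃ p, p ∈ S ∧ ∃ q, q ∈ S ∧ b = ({p, q} : ZFSet))
    (hB' : ∀ b ∈ B', ∃ p, p ∈ S ∧ ∃ q, q ∈ S ∧ b = ({p, q} : ZFSet)) :
    (⋃ b ∈ B, powAst12 b) = (⋃ b ∈ B', powAst12 b) ↔ B = B' := by
  constructor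
  · intro h
    have main : ∀ (C C' : Set ZFSet),
        (∀ b ∈ C, ∃ p, p ∈ S ∧ ∃ q, q ∈ S ∧ b = ({p, q} : ZFSet)) →
        (∀ b ∈ C', ∃ p, p ∈ S ∧ ∃ q, q ∈ S ∧ b = ({p, q} : ZFSet)) →
        (⋃ b ∈ C, powAst12 b) = (⋃ b ∈ C', powAst12 b) → C ⊆ C' := by
      intro C C' hC hC' heq b hb
      obtain ⟨p, hp, q, hq, rfl⟩ := hC b hb
      obtain ⟨t, ht⟩ := canonical S hS hp hq
      have : t ∈ ⋃ b ∈ C', powAst12 b := by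
        rw [← heq]; exact Set.mem_biUnion hb ht
      obtain ⟨b', hb', ht'⟩ := Set.mem_iUnion₂.1 this
      obtain ⟨p', hp', q', hq', rfl⟩ := hC' b' hb'
      rw [key S hS hp hq hp' hq' ht ht']
      exact hb'
    exact Set.Subset.antisymm (main B B' hB hB' h) (main B' B hB' hB h.symm)
  · rintro rfl; rfl


end BSTO
end

section
/- The ⊗-graph G_Σ induced by any partition Σ of well-founded sets is accessible, i.e., every place of G_Σ is accessible from the source places of G_Σ. -/
namespace BSTO

/-- the ⊗-graph induced by any partition `S` (via a bijection `e` from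
the places onto the blocks, and relative to the set `Pi` of ⊗-upblocks) is accessible. -/
theorem stmt11 (S : ZFSet) (hS : IsPartition S) {P : Type} (e : P ≃ S.toSet)
    (Pi : Set ZFSet)
    (hPi1 : ∀ b ∈ Pi, ∃ p, p ∈ S ∧ ∃ q, q ∈ S ∧ b = ({p, q} : ZFSet))
    (hPi2 : (⋃ c ∈ sigmaOtimes S, c.toSet) = ⋃ b ∈ Pi, powAst12 b) :
    ∀ p : P, Accessible (inducedT S e Pi) p := by
  set T := inducedT S e Pi with hT
  set μ : P → Ordinal := fun q => sInf (ZFSet.rank '' (e q : ZFSet).toSet) with hμ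
  suffices H : ∀ o : Ordinal, ∀ q : P, μ q = o → Accessible T q by
    exact fun p => H (μ p) p rfl
  intro o
  induction o using Ordinal.induction with
  | h o IH =>
  intro q hq
  by_cases hsrc : ∀ A ∈ NodesOf P, q ∉ T A
  · exact Accessible.source q hsrc
  push_neg at hsrc
  obtain ⟨A, -, hqA⟩ := hsrc
  obtain ⟨-, -, -, -, hσ, -⟩ := hqA
  -- e q is a nonempty block
  have heqS : (e q : ZFSet) ∈ S := (e q).2
  have hne : ((e q : ZFSet)).toSet.Nonempty := by
    rcases ZFSet.eq_empty_or_nonempty (e q : ZFSet) with h | h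
    · exact absurd h (hS.1 _ heqS)
    · obtain ⟨x, hx⟩ := h; exact ⟨x, hx⟩
  -- pick the minimum-rank element x of e q
  have himne : (ZFSet.rank '' (e q : ZFSet).toSet).Nonempty := hne.image _
  obtain ⟨x, hx, hrx⟩ := csInf_mem himne
  -- x belongs to some powAst12 b with b ∈ Pi
  have hxU : x ∈ ⋃ b ∈ Pi, powAst12 b := by
    rw [← hPi2]
    exact Set.mem_biUnion hσ hx
  obtain ⟨b, hbPi, hxb⟩ := Set.mem_iUnion₂.1 hxU
  obtain ⟨a₁, ha₁S, a₂, ha₂S, hbeq⟩ := hPi1 b hbPi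
  obtain ⟨-, hmeet, -⟩ := id hxb
  have hu : ∃ u, u ∈ x ∧ u ∈ a₁ := by
    apply hmeet; rw [hbeq]; exact ZFSet.mem_insert _ _
  have hv : ∃ v, v ∈ x ∧ v ∈ a₂ := by
    apply hmeet; rw [hbeq]
    exact ZFSet.mem_insert_iff.2 (Or.inr (ZFSet.mem_singleton.2 rfl))
  obtain ⟨u, hux, hua⟩ := hu
  obtain ⟨v, hvx, hva⟩ := hv
  set p₁ : P := e.symm ⟨a₁, ha₁S⟩ with hp₁
  set p₂ : P := e.symm ⟨a₂, ha₂S⟩ with hp₂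
  have hep₁ : (e p₁ : ZFSet) = a₁ := by rw [hp₁, Equiv.apply_symm_apply]
  have hep₂ : (e p₂ : ZFSet) = a₂ := by rw [hp₂, Equiv.apply_symm_apply]
  have hsmall : ∀ r : P, (e r : ZFSet) ∈ ({a₁, a₂} : Set ZFSet) → μ r < o := by
    rintro r hr
    have : ∃ w, w ∈ x ∧ w ∈ (e r : ZFSet) := by
      rcases hr with h | h
      · exact ⟨u, hux, h ▸ hua⟩
      · exact ⟨v, hvx, (Set.mem_singleton_iff.1 h) ▸ hva⟩
    obtain ⟨w, hwx, hwr⟩ := this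
    have h1 : μ r ≤ ZFSet.rank w := csInf_le' ⟨w, hwr, rfl⟩
    have h2 : ZFSet.rank w < ZFSet.rank x := ZFSet.rank_lt_of_mem hwx
    calc μ r ≤ ZFSet.rank w := h1
      _ < ZFSet.rank x := h2
      _ = o := by rw [hrx, ← hq]
  refine Accessible.step q {p₁, p₂} ⟨p₁, p₂, rfl⟩ ?_ ?_
  · rintro r (rfl | rfl)
    · exact IH _ (hsmall _ (by rw [hep₁]; exact Or.inl rfl)) _ rfl
    · exact IH _ (hsmall _ (by rw [hep₂]; exact Or.inr rfl)) _ rfl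
  · refine ⟨p₁, p₂, rfl, ?_, hσ, ⟨x, hx, ?_⟩⟩
    · rw [hep₁, hep₂, ← hbeq]; exact hbPi
    · rw [hep₁, hep₂, ← hbeq]; exact hxb

end BSTO
end

section
/- Let Σ be a partition satisfying a BST⊗-conjunction Φ via a partition assignment 𝔍. Then the accessible ⊗-graph G_Σ induced by Σ fulfills Φ via the map 𝔉_Σ(x) := { q : q• ∈ 𝔍(x) }. -/
namespace BSTO

section Aux

lemma zmem_pair {x a b : ZFSet} : x ∈ ({a,b}:ZFSet) ↔ x = a ∨ x = b := by simp

lemma zpair_comm (u v : ZFSet) : ({u,v}:ZFSet) = {v,u} := by ext; simp; tauto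

lemma block_nonempty {S b : ZFSet} (hS : IsPartition S) (hb : b ∈ S) : ∃ t, t ∈ b := by
  by_contra h'; push_neg at h'; exact hS.1 b hb ((ZFSet.eq_empty b).2 h')

lemma mem_powAst12_pair {b₁ b₂ u v : ZFSet} (hu : u ∈ b₁) (hv : v ∈ b₂) :
    ({u,v}:ZFSet) ∈ powAst12 ({b₁,b₂}:ZFSet) := by
  refine ⟨?_, ?_, u, v, rfl⟩
  · intro w hw
    rw [ZFSet.mem_sUnion]
    rcases zmem_pair.1 hw with h | h
    · exact ⟨b₁, by simp, h ▸ hu⟩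
    · exact ⟨b₂, by simp, h ▸ hv⟩
  · intro s hs
    rcases zmem_pair.1 hs with h | h
    · exact ⟨u, by simp, h ▸ hu⟩
    · exact ⟨v, by simp, h ▸ hv⟩

lemma powAst12_pair_elim {b₁ b₂ t : ZFSet} (ht : t ∈ powAst12 ({b₁,b₂}:ZFSet)) :
    ∃ u ∈ b₁, ∃ v ∈ b₂, t = ({u,v}:ZFSet) := by
  obtain ⟨hsub, hmeet, a, b, rfl⟩ := ht
  obtain ⟨u, hut, hu1⟩ := hmeet b₁ (by simp)
  obtain ⟨v, hvt, hv2⟩ := hmeet b₂ (by simp)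
  have hsub' : ∀ w ∈ ({a,b}:ZFSet), w ∈ b₁ ∨ w ∈ b₂ := by
    intro w hw
    have h := hsub hw
    rw [ZFSet.mem_sUnion] at h
    obtain ⟨c, hc, hwc⟩ := h
    rcases zmem_pair.1 hc with h | h
    · exact Or.inl (h ▸ hwc)
    · exact Or.inr (h ▸ hwc)
  have hu' : u = a ∨ u = b := zmem_pair.1 hut
  have hv' : v = a ∨ v = b := zmem_pair.1 hvt
  rcases hu' with h1 | h1 <;> rcases hv' with h2 | h2
  · rcases hsub' b (by simp) with h | h
    · exact ⟨b, h, v, hv2, by rw [h2]; exact zpair_comm a b⟩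
    · exact ⟨u, hu1, b, h, by rw [h1]⟩
  · exact ⟨u, hu1, v, hv2, by rw [h1, h2]⟩
  · exact ⟨u, hu1, v, hv2, by rw [h1, h2]; exact zpair_comm a b⟩
  · rcases hsub' a (by simp) with h | h
    · exact ⟨a, h, v, hv2, by rw [h2]⟩
    · exact ⟨u, hu1, a, h, by rw [h1]; exact zpair_comm a b⟩

lemma pair_unique {S b₁ b₂ c₁ c₂ t : ZFSet} (hS : IsPartition S)
    (hb₁ : b₁ ∈ S) (hb₂ : b₂ ∈ S) (hc₁ : c₁ ∈ S) (hc₂ : c₂ ∈ S)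
    (h1 : t ∈ powAst12 ({b₁,b₂}:ZFSet)) (h2 : t ∈ powAst12 ({c₁,c₂}:ZFSet)) :
    ({b₁,b₂}:ZFSet) = ({c₁,c₂}:ZFSet) := by
  have key : ∀ d₁ d₂ e₁ e₂ : ZFSet, d₁ ∈ S → d₂ ∈ S → e₁ ∈ S → e₂ ∈ S →
      t ∈ powAst12 ({d₁,d₂}:ZFSet) → t ∈ powAst12 ({e₁,e₂}:ZFSet) →
      ∀ d ∈ ({d₁,d₂}:ZFSet), d ∈ ({e₁,e₂}:ZFSet) := by
    intro d₁ d₂ e₁ e₂ hd₁ hd₂ he₁ he₂ hp hq d hd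
    have hdS : d ∈ S := by rcases zmem_pair.1 hd with h|h
                           · exact h ▸ hd₁
                           · exact h ▸ hd₂
    obtain ⟨u, hut, hud⟩ := hp.2.1 d hd
    have h := hq.1 hut
    rw [ZFSet.mem_sUnion] at h
    obtain ⟨c, hc, huc⟩ := h
    have hcS : c ∈ S := by rcases zmem_pair.1 hc with h|h
                           · exact h ▸ he₁
                           · exact h ▸ he₂
    have hdc : d = c := by
      by_contra hne
      exact hS.2 d hdS c hcS hne u hud huc
    exact hdc ▸ hc
  ext w
  constructor
  · intro hw; exact key b₁ b₂ c₁ c₂ hb₁ hb₂ hc₁ hc₂ h1 h2 w hw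
  · intro hw; exact key c₁ c₂ b₁ b₂ hc₁ hc₂ hb₁ hb₂ h2 h1 w hw

lemma memJ_iff {S J b t : ZFSet} (hS : IsPartition S) (hJ : J ⊆ S)
    (hb : b ∈ S) (ht : t ∈ b) : b ∈ J ↔ t ∈ ZFSet.sUnion J := by
  constructor
  · intro h; exact ZFSet.mem_sUnion.2 ⟨b, h, ht⟩
  · intro h
    obtain ⟨c, hc, htc⟩ := ZFSet.mem_sUnion.1 h
    have hbc : b = c := by
      by_contra hne
      exact hS.2 b hb c (hJ hc) hne t ht htc
    exact hbc ▸ hc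

lemma pairset_image {P : Type} (f : P → ZFSet) {p₁ p₂ υ ζ : P}
    (h : ({p₁,p₂} : Set P) = {υ,ζ}) : ({f p₁, f p₂}:ZFSet) = {f υ, f ζ} := by
  have h1 : p₁ = υ ∨ p₁ = ζ := by
    have := h ▸ (Set.mem_insert p₁ {p₂}); simpa using this
  have h2 : p₂ = υ ∨ p₂ = ζ := by
    have := h ▸ (show p₂ ∈ ({p₁,p₂} : Set P) by simp); simpa using this
  have h3 : υ = p₁ ∨ υ = p₂ := by
    have := (Set.ext_iff.1 h υ).2 (by simp); simpa using this
  have h4 : ζ = p₁ ∨ ζ = p₂ := by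
    have := (Set.ext_iff.1 h ζ).2 (by simp); simpa using this
  ext w
  rw [zmem_pair, zmem_pair]
  constructor
  · rintro (rfl|rfl)
    · rcases h1 with hh|hh <;> simp [hh]
    · rcases h2 with hh|hh <;> simp [hh]
  · rintro (rfl|rfl)
    · rcases h3 with hh|hh <;> simp [hh]
    · rcases h4 with hh|hh <;> simp [hh]

end Aux

/-- if a partition `S` satisfies a BST⊗-conjunction `Φ` via the
partition assignment `J`, then the induced ⊗-graph fulfills `Φ` via the map
`x ↦ { q : q• ∈ J x }`. -/
theorem stmt12 {V : Type} (Φ : List (Lit V)) (S : ZFSet) (hS : IsPartition S)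
    (J : V → ZFSet) (hJ : ∀ v, J v ⊆ S)
    (hsat : ∀ l ∈ Φ, Lit.Sat (fun v => ZFSet.sUnion (J v)) l)
    {P : Type} (e : P ≃ S.toSet) (Pi : Set ZFSet)
    (hPi1 : ∀ b ∈ Pi, ∃ p, p ∈ S ∧ ∃ q, q ∈ S ∧ b = ({p, q} : ZFSet))
    (hPi2 : (⋃ c ∈ sigmaOtimes S, c.toSet) = ⋃ b ∈ Pi, powAst12 b) :
    Fulfills (inducedT S e Pi) (fun x => {q : P | (e q : ZFSet) ∈ J x}) Φ := by
  have heS : ∀ q : P, (e q : ZFSet) ∈ S := fun q => (e q).2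
  intro l hl
  have hls := hsat l hl
  cases l with
  | eqUnion x y z =>
      have hm : ZFSet.sUnion (J x) = ZFSet.sUnion (J y) ∪ ZFSet.sUnion (J z) := hls
      show _ = _
      ext q
      obtain ⟨t, ht⟩ := block_nonempty hS (heS q)
      simp only [Set.mem_union, Set.mem_setOf_eq]
      rw [memJ_iff hS (hJ x) (heS q) ht, memJ_iff hS (hJ y) (heS q) ht,
        memJ_iff hS (hJ z) (heS q) ht, hm, ZFSet.mem_union]
  | eqDiff x y z =>
      have hm : ZFSet.sUnion (J x) = ZFSet.sUnion (J y) \ ZFSet.sUnion (J z) := hls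
      show _ = _
      ext q
      obtain ⟨t, ht⟩ := block_nonempty hS (heS q)
      simp only [Set.mem_diff, Set.mem_setOf_eq]
      rw [memJ_iff hS (hJ x) (heS q) ht, memJ_iff hS (hJ y) (heS q) ht,
        memJ_iff hS (hJ z) (heS q) ht, hm, ZFSet.mem_sdiff]
  | ne x y =>
      have hm : ZFSet.sUnion (J x) ≠ ZFSet.sUnion (J y) := hls
      intro h
      apply hm
      have h' : {q : P | (e q : ZFSet) ∈ J x} = {q : P | (e q : ZFSet) ∈ J y} := h
      have hJeq : J x = J y := by
        ext b
        constructor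
        · intro hb
          have hbS : b ∈ S := hJ x hb
          have hq : (e (e.symm ⟨b, hbS⟩) : ZFSet) = b := by rw [Equiv.apply_symm_apply]
          have : e.symm ⟨b, hbS⟩ ∈ {q : P | (e q : ZFSet) ∈ J x} := by
            simp only [Set.mem_setOf_eq, hq]; exact hb
          rw [h'] at this
          simp only [Set.mem_setOf_eq, hq] at this
          exact this
        · intro hb
          have hbS : b ∈ S := hJ y hb
          have hq : (e (e.symm ⟨b, hbS⟩) : ZFSet) = b := by rw [Equiv.apply_symm_apply]
          have : e.symm ⟨b, hbS⟩ ∈ {q : P | (e q : ZFSet) ∈ J y} := by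
            simp only [Set.mem_setOf_eq, hq]; exact hb
          rw [← h'] at this
          simp only [Set.mem_setOf_eq, hq] at this
          exact this
      rw [hJeq]
  | eqUprod x y z =>
      have hm : (ZFSet.sUnion (J x)).toSet =
          uprod (ZFSet.sUnion (J y)) (ZFSet.sUnion (J z)) := hls
      -- every powAst12 element of a (J y, J z)-pair belongs to ⋃₀ J x
      have haux1 : ∀ b₁, b₁ ∈ J y → ∀ b₂, b₂ ∈ J z →
          ∀ t ∈ powAst12 ({b₁, b₂} : ZFSet), t ∈ ZFSet.sUnion (J x) := by
        intro b₁ hb₁ b₂ hb₂ t ht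
        obtain ⟨u, hu, v, hv, rfl⟩ := powAst12_pair_elim ht
        have : ({u,v}:ZFSet) ∈ uprod (ZFSet.sUnion (J y)) (ZFSet.sUnion (J z)) :=
          ⟨u, ZFSet.mem_sUnion.2 ⟨b₁, hb₁, hu⟩, v, ZFSet.mem_sUnion.2 ⟨b₂, hb₂, hv⟩, rfl⟩
        rw [← hm] at this
        exact this
      -- every block of J x is in the maximal ⊗-subpartition
      have hsig : ∀ c, c ∈ J x → c ∈ sigmaOtimes S := by
        intro c hc
        refine ⟨{d | d ∈ J x}, ⟨fun d hd => hJ x hd,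
          {B | ∃ b₁, b₁ ∈ J y ∧ ∃ b₂, b₂ ∈ J z ∧ B = ({b₁, b₂} : ZFSet)}, ?_, ?_⟩, hc⟩
        · rintro B ⟨b₁, hb₁, b₂, hb₂, rfl⟩
          exact ⟨b₁, hJ y hb₁, b₂, hJ z hb₂, rfl⟩
        · ext t
          simp only [Set.mem_iUnion, Set.mem_setOf_eq]
          constructor
          · rintro ⟨d, hd, htd⟩
            have htx : t ∈ ZFSet.sUnion (J x) :=
              ZFSet.mem_sUnion.2 ⟨d, hd, (SetLike.mem_coe).1 htd⟩
            have htu : t ∈ uprod (ZFSet.sUnion (J y)) (ZFSet.sUnion (J z)) := by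
              rw [← hm]; exact htx
            obtain ⟨u, hu, v, hv, rfl⟩ := htu
            obtain ⟨b₁, hb₁, hub⟩ := ZFSet.mem_sUnion.1 hu
            obtain ⟨b₂, hb₂, hvb⟩ := ZFSet.mem_sUnion.1 hv
            exact ⟨({b₁,b₂}:ZFSet), ⟨b₁, hb₁, b₂, hb₂, rfl⟩, mem_powAst12_pair hub hvb⟩
          · rintro ⟨B, ⟨b₁, hb₁, b₂, hb₂, rfl⟩, htB⟩
            have := haux1 b₁ hb₁ b₂ hb₂ t htB
            obtain ⟨d, hd, htd⟩ := ZFSet.mem_sUnion.1 this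
            exact ⟨d, hd, (SetLike.mem_coe).2 htd⟩
      -- any pair of blocks witnessed inside Σ_⊗ is in Pi
      have hPimem : ∀ b₁, b₁ ∈ S → ∀ b₂, b₂ ∈ S → ∀ t c : ZFSet,
          t ∈ powAst12 ({b₁, b₂} : ZFSet) → t ∈ c → c ∈ sigmaOtimes S →
          ({b₁, b₂} : ZFSet) ∈ Pi := by
        intro b₁ hb₁ b₂ hb₂ t c ht htc hcs
        have htU : t ∈ ⋃ b ∈ Pi, powAst12 b := by
          rw [← hPi2]
          simp only [Set.mem_iUnion]
          exact ⟨c, hcs, (SetLike.mem_coe).2 htc⟩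
        simp only [Set.mem_iUnion] at htU
        obtain ⟨b', hb'Pi, htb'⟩ := htU
        obtain ⟨c₁, hc₁, c₂, hc₂, rfl⟩ := hPi1 b' hb'Pi
        rw [pair_unique hS hb₁ hb₂ hc₁ hc₂ ht htb']
        exact hb'Pi
      refine ⟨?_, ?_, ?_⟩
      · -- (c1)
        intro υ hυ ζ hζ
        have hbυ : (e υ : ZFSet) ∈ J y := hυ
        have hbζ : (e ζ : ZFSet) ∈ J z := hζ
        obtain ⟨u, hu⟩ := block_nonempty hS (heS υ)
        obtain ⟨v, hv⟩ := block_nonempty hS (heS ζ)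
        have htp : ({u,v}:ZFSet) ∈ powAst12 ({(e υ : ZFSet), (e ζ : ZFSet)}:ZFSet) :=
          mem_powAst12_pair hu hv
        have htx := haux1 _ hbυ _ hbζ _ htp
        obtain ⟨c, hc, htc⟩ := ZFSet.mem_sUnion.1 htx
        have hcS : c ∈ S := hJ x hc
        have hPimem' : ({(e υ : ZFSet), (e ζ : ZFSet)}:ZFSet) ∈ Pi :=
          hPimem _ (heS υ) _ (heS ζ) _ c htp htc (hsig c hc)
        constructor
        · -- nonemptiness
          refine ⟨e.symm ⟨c, hcS⟩, υ, ζ, rfl, hPimem', ?_, ?_⟩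
          · rw [Equiv.apply_symm_apply]; exact hsig c hc
          · refine ⟨({u,v}:ZFSet), ?_, htp⟩
            rw [Equiv.apply_symm_apply]
            exact (SetLike.mem_coe).2 htc
        · -- T {υ,ζ} ⊆ F x
          rintro q ⟨p₁, p₂, hA, _hpi, _hsg, t, ht1, ht2⟩
          have hpair : ({(e p₁ : ZFSet), (e p₂ : ZFSet)}:ZFSet) =
              {(e υ : ZFSet), (e ζ : ZFSet)} :=
            pairset_image (fun p => (e p : ZFSet)) hA.symm
          rw [hpair] at ht2
          have htx' := haux1 _ hbυ _ hbζ _ ht2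
          obtain ⟨c', hc', htc'⟩ := ZFSet.mem_sUnion.1 htx'
          have ht1' : t ∈ (e q : ZFSet) := (SetLike.mem_coe).1 ht1
          have : (e q : ZFSet) = c' := by
            by_contra hne
            exact hS.2 _ (heS q) c' (hJ x hc') hne t ht1' htc'
          show (e q : ZFSet) ∈ J x
          rw [this]; exact hc'
      · -- (c2)
        intro q hq
        have hqx : (e q : ZFSet) ∈ J x := hq
        obtain ⟨t, ht⟩ := block_nonempty hS (heS q)
        have htx : t ∈ ZFSet.sUnion (J x) := ZFSet.mem_sUnion.2 ⟨_, hqx, ht⟩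
        have htu : t ∈ uprod (ZFSet.sUnion (J y)) (ZFSet.sUnion (J z)) := by
          rw [← hm]; exact htx
        obtain ⟨u, hu, v, hv, rfl⟩ := htu
        obtain ⟨b₁, hb₁, hub⟩ := ZFSet.mem_sUnion.1 hu
        obtain ⟨b₂, hb₂, hvb⟩ := ZFSet.mem_sUnion.1 hv
        have hb₁S : b₁ ∈ S := hJ y hb₁
        have hb₂S : b₂ ∈ S := hJ z hb₂
        set υ := e.symm ⟨b₁, hb₁S⟩ with hυdef
        set ζ := e.symm ⟨b₂, hb₂S⟩ with hζdef
        have heυ : (e υ : ZFSet) = b₁ := by rw [hυdef, Equiv.apply_symm_apply]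
        have heζ : (e ζ : ZFSet) = b₂ := by rw [hζdef, Equiv.apply_symm_apply]
        have htp : ({u,v}:ZFSet) ∈ powAst12 ({(e υ : ZFSet), (e ζ : ZFSet)}:ZFSet) := by
          rw [heυ, heζ]; exact mem_powAst12_pair hub hvb
        simp only [Set.mem_iUnion]
        refine ⟨{υ, ζ}, ⟨υ, by simp only [Set.mem_setOf_eq, heυ]; exact hb₁,
            ζ, by simp only [Set.mem_setOf_eq, heζ]; exact hb₂, rfl⟩, ?_⟩
        refine ⟨υ, ζ, rfl, ?_, hsig _ hqx, ({u,v}:ZFSet),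
          (SetLike.mem_coe).2 ht, htp⟩
        exact hPimem _ (heS υ) _ (heS ζ) _ _ htp ht (hsig _ hqx)
      · -- (c3)
        rw [Set.eq_empty_iff_forall_notMem]
        rintro q ⟨hq1, hq2⟩
        simp only [Set.mem_iUnion] at hq1
        obtain ⟨A, ⟨_hAnode, hAnot⟩, hqT⟩ := hq1
        obtain ⟨p₁, p₂, rfl, _hpi, _hsg, t, ht1, ht2⟩ := hqT
        have hqx : (e q : ZFSet) ∈ J x := hq2
        have ht1' : t ∈ (e q : ZFSet) := (SetLike.mem_coe).1 ht1
        have htx : t ∈ ZFSet.sUnion (J x) := ZFSet.mem_sUnion.2 ⟨_, hqx, ht1'⟩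
        have htu : t ∈ uprod (ZFSet.sUnion (J y)) (ZFSet.sUnion (J z)) := by
          rw [← hm]; exact htx
        obtain ⟨u, hu, v, hv, rfl⟩ := htu
        obtain ⟨b₁, hb₁, hub⟩ := ZFSet.mem_sUnion.1 hu
        obtain ⟨b₂, hb₂, hvb⟩ := ZFSet.mem_sUnion.1 hv
        have hb₁S : b₁ ∈ S := hJ y hb₁
        have hb₂S : b₂ ∈ S := hJ z hb₂
        have htp : ({u,v}:ZFSet) ∈ powAst12 ({b₁, b₂}:ZFSet) :=
          mem_powAst12_pair hub hvb
        have heq : ({(e p₁ : ZFSet), (e p₂ : ZFSet)}:ZFSet) = {b₁, b₂} :=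
          pair_unique hS (heS p₁) (heS p₂) hb₁S hb₂S ht2 htp
        have hm1 : b₁ = (e p₁ : ZFSet) ∨ b₁ = (e p₂ : ZFSet) := by
          have : b₁ ∈ ({(e p₁ : ZFSet), (e p₂ : ZFSet)}:ZFSet) := by
            rw [heq]; simp
          exact zmem_pair.1 this
        have hm2 : b₂ = (e p₁ : ZFSet) ∨ b₂ = (e p₂ : ZFSet) := by
          have : b₂ ∈ ({(e p₁ : ZFSet), (e p₂ : ZFSet)}:ZFSet) := by
            rw [heq]; simp
          exact zmem_pair.1 this
        have hm3 : (e p₁ : ZFSet) = b₁ ∨ (e p₁ : ZFSet) = b₂ := by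
          have : (e p₁ : ZFSet) ∈ ({b₁, b₂}:ZFSet) := by rw [← heq]; simp
          exact zmem_pair.1 this
        have hm4 : (e p₂ : ZFSet) = b₁ ∨ (e p₂ : ZFSet) = b₂ := by
          have : (e p₂ : ZFSet) ∈ ({b₁, b₂}:ZFSet) := by rw [← heq]; simp
          exact zmem_pair.1 this
        apply hAnot
        rcases hm1 with h1 | h1
        · rcases hm2 with h2 | h2
          · -- b₁ = e p₁ = b₂, so e p₂ = b₁ = b₂ as well
            rcases hm4 with h4 | h4
            · exact ⟨p₁, by simp only [Set.mem_setOf_eq, ← h1]; exact hb₁,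
                p₂, by simp only [Set.mem_setOf_eq, h4, ← h2, h1]; exact hb₂, rfl⟩
            · exact ⟨p₁, by simp only [Set.mem_setOf_eq, ← h1]; exact hb₁,
                p₂, by simp only [Set.mem_setOf_eq, h4]; exact hb₂, rfl⟩
          · exact ⟨p₁, by simp only [Set.mem_setOf_eq, ← h1]; exact hb₁,
              p₂, by simp only [Set.mem_setOf_eq, ← h2]; exact hb₂, rfl⟩
        · rcases hm2 with h2 | h2
          · exact ⟨p₂, by simp only [Set.mem_setOf_eq, ← h1]; exact hb₁,
              p₁, by simp only [Set.mem_setOf_eq, ← h2]; exact hb₂, Set.pair_comm p₁ p₂⟩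
          · -- b₁ = e p₂ = b₂, so e p₁ = b₁ = b₂ as well
            rcases hm3 with h3 | h3
            · exact ⟨p₂, by simp only [Set.mem_setOf_eq, ← h1]; exact hb₁,
                p₁, by simp only [Set.mem_setOf_eq, h3, h1, ← h2]; exact hb₂,
                Set.pair_comm p₁ p₂⟩
            · exact ⟨p₂, by simp only [Set.mem_setOf_eq, ← h1]; exact hb₁,
                p₁, by simp only [Set.mem_setOf_eq, h3]; exact hb₂, Set.pair_comm p₁ p₂⟩

end BSTO
end
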